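/- arXiv:2411.05334 — 11 statements merged into one kernel-verified Lean document; each statement's English description precedes it below -/
import Mathlib

section
/- First fundamental theorem of double almost-Riordan arrays, even case: Let u = Σ_{k≥0} u_{2k}t^{2k} be an even formal power series in K[[t]] and set U := Σ_{k≥0} u_{2k+2}t^{k}. Then for every n ≥ 0, Σ_{k=0}^{n} d_{n,k}·([t^k]u) = [t^n]( u₀·b + t·g·f₁·(U∘(f₁f₂)) ); i.e., applying (b|g;f₁,f₂) to the coefficient vector of an even series u produces the coefficient vector of u₀·b + (t g/f₂)(u(√(f₁f₂)) − u₀). -/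
open PowerSeries

variable {K : Type*} [Field K]

/-- Formal substitution `U ∘ h` of a power series `h` (intended with `h(0) = 0`)
into a power series `U`:  `[tⁿ](U∘h) = Σ_{j≤n} ([tʲ]U)·[tⁿ](hʲ)`. -/
noncomputable def psComp (U h : PowerSeries K) : PowerSeries K :=
  PowerSeries.mk fun n => ∑ j ∈ Finset.range (n + 1), coeff j U * coeff n (h ^ j)

/-- The `(n,k)` entry of the double almost-Riordan array `(b | g ; f₁, f₂)`:
column 0 is `b`, column `2ℓ+1` is `t·g·(f₁f₂)^ℓ`, column `2ℓ+2` is `t·g·f₁·(f₁f₂)^ℓ`. -/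
noncomputable def dar (b g f₁ f₂ : PowerSeries K) (n k : ℕ) : K :=
  if k = 0 then coeff n b
  else if k % 2 = 1 then coeff n (X * g * (f₁ * f₂) ^ ((k - 1) / 2))
  else coeff n (X * g * f₁ * (f₁ * f₂) ^ ((k - 2) / 2))

private lemma sum_two_mul (F : ℕ → K) (m : ℕ) :
    ∑ k ∈ Finset.range (2 * m), F k =
      ∑ i ∈ Finset.range m, F (2 * i) + ∑ i ∈ Finset.range m, F (2 * i + 1) := by
  induction m with
  | zero => simp
  | succ m ih =>
    have h2 : 2 * (m + 1) = (2 * m + 1) + 1 := by ring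
    rw [h2, Finset.sum_range_succ, Finset.sum_range_succ, ih,
      Finset.sum_range_succ, Finset.sum_range_succ]
    ring

/-- First fundamental theorem of double almost-Riordan arrays, even case. -/
theorem fft_even
    (b g f₁ f₂ : PowerSeries K)
    (hbe : ∀ k, coeff (2 * k + 1) b = 0)
    (hge : ∀ k, coeff (2 * k + 1) g = 0)
    (hb0 : constantCoeff b ≠ 0)
    (hg0 : constantCoeff g ≠ 0)
    (hf₁o : ∀ k, coeff (2 * k) f₁ = 0)
    (hf₂o : ∀ k, coeff (2 * k) f₂ = 0)
    (hf₁1 : coeff 1 f₁ ≠ 0)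
    (hf₂1 : coeff 1 f₂ ≠ 0)
    (u U : PowerSeries K)
    (hue : ∀ k, coeff (2 * k + 1) u = 0)
    (hU : ∀ k, coeff k U = coeff (2 * k + 2) u) :
    ∀ n : ℕ,
      ∑ k ∈ Finset.range (n + 1), dar b g f₁ f₂ n k * coeff k u =
        coeff n (C (constantCoeff u) * b + X * g * f₁ * psComp U (f₁ * f₂)) := by
  intro n
  have hf₁X : (X : PowerSeries K) ∣ f₁ := by
    rw [X_dvd_iff]; simpa using hf₁o 0
  have hf₂X : (X : PowerSeries K) ∣ f₂ := by
    rw [X_dvd_iff]; simpa using hf₂o 0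
  have hhX : (X : PowerSeries K) ∣ f₁ * f₂ := hf₁X.mul_right f₂
  have hpow : ∀ j m : ℕ, m < j → coeff m ((f₁ * f₂) ^ j) = 0 := by
    intro j m hm
    exact X_pow_dvd_iff.mp (pow_dvd_pow_of_dvd hhX j) m hm
  have hAzero : ∀ ℓ m : ℕ, m < 2 * ℓ + 2 →
      coeff m (X * g * f₁ * (f₁ * f₂) ^ ℓ) = 0 := by
    intro ℓ m hm
    have hdvd : (X : PowerSeries K) ^ (2 * ℓ + 2) ∣ X * g * f₁ * (f₁ * f₂) ^ ℓ := by
      have h1 : (X : PowerSeries K) ^ (2 * ℓ + 2) = (X * X) * ((X * X) ^ ℓ) := by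
        ring
      rw [h1]
      have h2 : (X * X : PowerSeries K) * (X * X) ^ ℓ ∣ (X * f₁) * (f₁ * f₂) ^ ℓ :=
        mul_dvd_mul (mul_dvd_mul dvd_rfl hf₁X)
          (pow_dvd_pow_of_dvd (mul_dvd_mul hf₁X hf₂X) ℓ)
      refine h2.trans ?_
      have h3 : X * g * f₁ * (f₁ * f₂) ^ ℓ = g * ((X * f₁) * (f₁ * f₂) ^ ℓ) := by ring
      rw [h3]; exact dvd_mul_left _ _
    exact X_pow_dvd_iff.mp hdvd m hm
  -- the RHS composition term as a finite sum
  have hcomp : coeff n (X * g * f₁ * psComp U (f₁ * f₂)) =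
      ∑ j ∈ Finset.range (n + 1),
        coeff n (X * g * f₁ * (f₁ * f₂) ^ j) * coeff j U := by
    rw [coeff_mul]
    have step1 : ∀ p ∈ Finset.HasAntidiagonal.antidiagonal n,
        coeff p.1 (X * g * f₁) * coeff p.2 (psComp U (f₁ * f₂)) =
        ∑ j ∈ Finset.range (n + 1),
          coeff p.1 (X * g * f₁) * (coeff j U * coeff p.2 ((f₁ * f₂) ^ j)) := by
      intro p hp
      rw [psComp, coeff_mk, Finset.mul_sum]
      apply Finset.sum_subset
      · apply Finset.range_subset_range.mpr
        have := Finset.HasAntidiagonal.mem_antidiagonal.mp hp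
        omega
      · intro j hj hj'
        have hlt : p.2 < j := by
          simp only [Finset.mem_range] at hj hj'; omega
        rw [hpow j p.2 hlt, mul_zero, mul_zero]
    rw [Finset.sum_congr rfl step1, Finset.sum_comm]
    refine Finset.sum_congr rfl fun j hj => ?_
    rw [coeff_mul, Finset.sum_mul]
    refine Finset.sum_congr rfl fun p hp => ?_
    ring
  set F : ℕ → K := fun k => dar b g f₁ f₂ n k * coeff k u with hF
  have hodd : ∀ i, F (2 * i + 1) = 0 := by
    intro i
    simp [hF, hue i]
  have hextzero : ∀ k, n + 1 ≤ k → F k = 0 := by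
    intro k hk
    rcases Nat.even_or_odd k with he | ho
    · obtain ⟨t, ht⟩ := he
      obtain ⟨ℓ, rfl⟩ : ∃ ℓ, k = 2 * ℓ + 2 := ⟨t - 1, by omega⟩
      have hdar : dar b g f₁ f₂ n (2 * ℓ + 2) = 0 := by
        simp only [dar]
        rw [if_neg (by omega : ¬(2 * ℓ + 2 = 0)),
          if_neg (by omega : ¬((2 * ℓ + 2) % 2 = 1))]
        have h3 : (2 * ℓ + 2 - 2) / 2 = ℓ := by omega
        rw [h3]
        exact hAzero ℓ n (by omega)
      simp [hF, hdar]
    · obtain ⟨t, rfl⟩ := ho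
      exact hodd t
  have hstep1 : ∑ k ∈ Finset.range (n + 1), F k = ∑ k ∈ Finset.range (2 * (n + 2)), F k := by
    refine Finset.sum_subset (Finset.range_subset_range.mpr (by omega)) ?_
    intro k hk hk'
    refine hextzero k ?_
    simp only [Finset.mem_range] at hk'
    omega
  have hF0 : F 0 = constantCoeff u * coeff n b := by
    have hd : dar b g f₁ f₂ n 0 = coeff n b := by simp [dar]
    simp only [hF, hd, ← coeff_zero_eq_constantCoeff_apply]
    ring
  have hFe : ∀ i, F (2 * i + 2) =
      coeff n (X * g * f₁ * (f₁ * f₂) ^ i) * coeff i U := by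
    intro i
    simp only [hF, dar]
    rw [if_neg (by omega : ¬(2 * i + 2 = 0)),
      if_neg (by omega : ¬((2 * i + 2) % 2 = 1))]
    have h3 : (2 * i + 2 - 2) / 2 = i := by omega
    rw [h3, hU i]
  have hevensum : ∑ i ∈ Finset.range (n + 2), F (2 * i) =
      (∑ i ∈ Finset.range (n + 1), F (2 * i + 2)) + F 0 := by
    rw [Finset.sum_range_succ']
    simp only [Nat.mul_add, Nat.mul_one]
  calc ∑ k ∈ Finset.range (n + 1), F k
      = ∑ k ∈ Finset.range (2 * (n + 2)), F k := hstep1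
    _ = ∑ i ∈ Finset.range (n + 2), F (2 * i) +
        ∑ i ∈ Finset.range (n + 2), F (2 * i + 1) := sum_two_mul F (n + 2)
    _ = (∑ i ∈ Finset.range (n + 1), F (2 * i + 2)) + F 0 := by
        rw [hevensum, Finset.sum_eq_zero fun i _ => hodd i, add_zero]
    _ = coeff n (C (constantCoeff u) * b + X * g * f₁ * psComp U (f₁ * f₂)) := by
        rw [map_add, coeff_C_mul, hcomp, hF0]
        rw [Finset.sum_congr rfl fun i _ => hFe i]
        ring
end

section
/- First fundamental theorem of double almost-Riordan arrays, odd case: Let u = Σ_{k≥0} u_{2k+1}t^{2k+1} be an odd formal power series in K[[t]] and set V := Σ_{k≥0} u_{2k+1}t^{k}. Then for every n ≥ 0, Σ_{k=0}^{n} d_{n,k}·([t^k]u) = [t^n]( t·g·(V∘(f₁f₂)) ); i.e., applying (b|g;f₁,f₂) to the coefficient vector of an odd series u produces the coefficient vector of (t g/√(f₁f₂))·u(√(f₁f₂)). -/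
open PowerSeries

variable {K : Type*} [Field K]

/-- First fundamental theorem of double almost-Riordan arrays, odd case. -/
theorem fft_odd
    (b g f₁ f₂ : PowerSeries K)
    (hbe : ∀ k, coeff (2 * k + 1) b = 0)
    (hge : ∀ k, coeff (2 * k + 1) g = 0)
    (hb0 : constantCoeff b ≠ 0)
    (hg0 : constantCoeff g ≠ 0)
    (hf₁o : ∀ k, coeff (2 * k) f₁ = 0)
    (hf₂o : ∀ k, coeff (2 * k) f₂ = 0)
    (hf₁1 : coeff 1 f₁ ≠ 0)
    (hf₂1 : coeff 1 f₂ ≠ 0)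
    (u V : PowerSeries K)
    (huo : ∀ k, coeff (2 * k) u = 0)
    (hV : ∀ k, coeff k V = coeff (2 * k + 1) u) :
    ∀ n : ℕ,
      ∑ k ∈ Finset.range (n + 1), dar b g f₁ f₂ n k * coeff k u =
        coeff n (X * g * psComp V (f₁ * f₂)) := by
  intro n
  have hX1 : (X : PowerSeries K) ∣ f₁ := X_dvd_iff.mpr (by simpa using hf₁o 0)
  have hX2 : (X : PowerSeries K) ∣ f₂ := X_dvd_iff.mpr (by simpa using hf₂o 0)
  have hpow : ∀ j : ℕ, (X : PowerSeries K) ^ (2 * j) ∣ (f₁ * f₂) ^ j := by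
    intro j
    rw [pow_mul]
    exact pow_dvd_pow_of_dvd (by rw [sq]; exact mul_dvd_mul hX1 hX2) j
  have hcoeff : ∀ j c : ℕ, c < 2 * j → coeff c ((f₁ * f₂) ^ j) = 0 :=
    fun j c hc => X_pow_dvd_iff.mp (hpow j) c hc
  have hvan : ∀ ℓ : ℕ, n < 2 * ℓ + 1 → coeff n (X * g * (f₁ * f₂) ^ ℓ) = 0 := by
    intro ℓ hn
    have hdvd : (X : PowerSeries K) ^ (2 * ℓ + 1) ∣ X * g * (f₁ * f₂) ^ ℓ := by
      obtain ⟨c, hc⟩ := hpow ℓ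
      exact ⟨g * c, by rw [hc, pow_succ]; ring⟩
    exact X_pow_dvd_iff.mp hdvd n hn
  have himg : Finset.filter (fun k => k % 2 = 1) (Finset.range (2 * (n + 1))) =
      Finset.image (fun ℓ => 2 * ℓ + 1) (Finset.range (n + 1)) := by
    ext k
    simp only [Finset.mem_filter, Finset.mem_range, Finset.mem_image]
    constructor
    · intro ⟨h1, h2⟩
      exact ⟨k / 2, by omega, by omega⟩
    · rintro ⟨ℓ, h1, rfl⟩
      omega
  calc ∑ k ∈ Finset.range (n + 1), dar b g f₁ f₂ n k * coeff k u
      = ∑ k ∈ Finset.range (2 * (n + 1)), dar b g f₁ f₂ n k * coeff k u := by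
        apply Finset.sum_subset (Finset.range_subset_range.mpr (by omega))
        intro k hk hnk
        simp only [Finset.mem_range] at hk hnk
        rcases Nat.even_or_odd k with ⟨m, hm⟩ | ⟨m, hm⟩
        · have hz : coeff k u = 0 := by
            have : k = 2 * m := by omega
            rw [this]; exact huo m
          rw [hz, mul_zero]
        · have hk0 : k ≠ 0 := by omega
          have hz : dar b g f₁ f₂ n k = 0 := by
            rw [dar, if_neg hk0, if_pos (by omega)]
            have he : (k - 1) / 2 = m := by omega
            rw [he]
            exact hvan m (by omega)
          rw [hz, zero_mul]
    _ = ∑ k ∈ Finset.filter (fun k => k % 2 = 1) (Finset.range (2 * (n + 1))),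
          dar b g f₁ f₂ n k * coeff k u := by
        symm
        apply Finset.sum_filter_of_ne
        intro k _ hne
        by_contra hodd
        have hz : coeff k u = 0 := by
          have : k = 2 * (k / 2) := by omega
          rw [this]; exact huo (k / 2)
        exact hne (by rw [hz, mul_zero])
    _ = ∑ ℓ ∈ Finset.range (n + 1), dar b g f₁ f₂ n (2 * ℓ + 1) * coeff (2 * ℓ + 1) u := by
        rw [himg, Finset.sum_image (fun a _ c _ h => by omega)]
    _ = ∑ ℓ ∈ Finset.range (n + 1), coeff n (X * g * (f₁ * f₂) ^ ℓ) * coeff ℓ V := by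
        apply Finset.sum_congr rfl
        intro ℓ _
        rw [dar, if_neg (by omega), if_pos (by omega), hV]
        have he : (2 * ℓ + 1 - 1) / 2 = ℓ := by omega
        rw [he]
    _ = coeff n (X * g * psComp V (f₁ * f₂)) := by
        rw [coeff_mul]
        have step : ∀ p ∈ Finset.HasAntidiagonal.antidiagonal n,
            coeff p.1 (X * g) * coeff p.2 (psComp V (f₁ * f₂)) =
              ∑ j ∈ Finset.range (n + 1),
                coeff p.1 (X * g) * (coeff j V * coeff p.2 ((f₁ * f₂) ^ j)) := by
          intro p hp
          have hp2 : p.2 ≤ n := by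
            have := Finset.HasAntidiagonal.mem_antidiagonal.mp hp
            omega
          simp only [psComp, coeff_mk, Finset.mul_sum]
          apply Finset.sum_subset (Finset.range_subset_range.mpr (by omega))
          intro j hj hnj
          simp only [Finset.mem_range] at hj hnj
          rw [hcoeff j p.2 (by omega), mul_zero, mul_zero]
        rw [Finset.sum_congr rfl step, Finset.sum_comm]
        apply Finset.sum_congr rfl
        intro j _
        rw [coeff_mul, Finset.sum_mul]
        apply Finset.sum_congr rfl
        intro p _
        ring
end

section
/- Product formula (closure of double almost-Riordan arrays under matrix multiplication): Let (b|g;f₁,f₂) = (d_{n,k}) and (c|d;h₁,h₂) = (e_{n,k}) be double almost-Riordan arrays, and write c = Σ_{k≥0} c_{2k}t^{2k}, and set C' := Σ_{k≥0} c_{2k+2}t^{k}, Ď := Σ_{k≥0} d_{2k}t^{k}, H₁ := Σ_{k≥0} h_{1,2k+1}t^{k}, H₂ := Σ_{k≥0} h_{2,2k+1}t^{k} (so that d = Ď(t²), h₁ = t·H₁(t²), h₂ = t·H₂(t²)). Then the matrix product, defined by (D·E)_{n,k} = Σ_{j=0}^{n} d_{n,j}e_{j,k}, equals the double almost-Riordan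 array (b*|g*;f₁*,f₂*), where b* = c₀·b + t·g·f₁·(C'∘(f₁f₂)), g* = g·(Ď∘(f₁f₂)), f₁* = f₁·(H₁∘(f₁f₂)) and f₂* = f₂·(H₂∘(f₁f₂)). (This is the product formula (b|g;f₁,f₂)(c|d;h₁,h₂) = ( c₀b + (tg/f₂)(c(√(f₁f₂))−c₀) | g·d(√(f₁f₂)); √(f₁/f₂)h₁(√(f₁f₂)), √(f₂/f₁)h₂(√(f₁f₂)) ).) -/
open PowerSeries

variable {K : Type*} [Field K]

open Finset

section DARaux

lemma dar_zero' (b g f₁ f₂ : PowerSeries K) (n : ℕ) :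
    dar b g f₁ f₂ n 0 = coeff n b := by simp [dar]

lemma dar_odd' (b g f₁ f₂ : PowerSeries K) (n m : ℕ) :
    dar b g f₁ f₂ n (2 * m + 1) = coeff n (X * g * (f₁ * f₂) ^ m) := by
  have h1 : (2 * m + 1) % 2 = 1 := by omega
  have h2 : (2 * m + 1 - 1) / 2 = m := by omega
  simp [dar, h1, h2]

lemma dar_even' (b g f₁ f₂ : PowerSeries K) (n m : ℕ) :
    dar b g f₁ f₂ n (2 * m + 2) = coeff n (X * g * f₁ * (f₁ * f₂) ^ m) := by
  have h1 : ¬ (2 * m + 2) % 2 = 1 := by omega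
  have h2 : (2 * m + 2 - 2) / 2 = m := by omega
  simp [dar, h1, h2]

lemma coeffFpow {F : PowerSeries K} (hF : constantCoeff F = 0) {n j : ℕ} (h : n < j) :
    coeff n (F ^ j) = 0 := by
  have hd : (X : PowerSeries K) ^ j ∣ F ^ j :=
    pow_dvd_pow_of_dvd (PowerSeries.X_dvd_iff.2 hF) j
  exact PowerSeries.X_pow_dvd_iff.1 hd n h

lemma psComp_coeff {F : PowerSeries K} (hF : constantCoeff F = 0)
    (U : PowerSeries K) {n N : ℕ} (h : n < N) :
    coeff n (psComp U F) = ∑ i ∈ range N, coeff i U * coeff n (F ^ i) := by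
  rw [psComp, coeff_mk]
  apply Finset.sum_subset (Finset.range_subset_range.2 h)
  intro i _ hni
  have : n < i := by simpa using hni
  rw [coeffFpow hF this, mul_zero]

lemma psComp_agree {F : PowerSeries K} (hF : constantCoeff F = 0)
    (U : PowerSeries K) (n : ℕ) :
    ∀ j ≤ n, coeff j (psComp U F)
      = coeff j (∑ i ∈ range (n + 1), coeff i U • F ^ i) := by
  intro j hj
  rw [psComp_coeff hF U (show j < n + 1 by omega), map_sum]
  exact Finset.sum_congr rfl fun i _ => by rw [coeff_smul, smul_eq_mul]

lemma coeff_mul_congr (P A B : PowerSeries K) (n : ℕ)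
    (h : ∀ j ≤ n, coeff j A = coeff j B) :
    coeff n (P * A) = coeff n (P * B) := by
  rw [coeff_mul, coeff_mul]
  apply Finset.sum_congr rfl
  rintro ⟨i, j⟩ hij
  rw [Finset.HasAntidiagonal.mem_antidiagonal] at hij
  rw [h j (by omega)]

lemma coeff_mul_psComp {F : PowerSeries K} (hF : constantCoeff F = 0)
    (P U : PowerSeries K) (n : ℕ) :
    coeff n (P * psComp U F)
      = ∑ ℓ ∈ range (n + 1), coeff ℓ U * coeff n (P * F ^ ℓ) := by
  rw [coeff_mul_congr P _ _ n (psComp_agree hF U n), Finset.mul_sum, map_sum]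
  exact Finset.sum_congr rfl fun i _ => by
    rw [mul_smul_comm, coeff_smul, smul_eq_mul]

lemma psComp_agree_aeval {F : PowerSeries K} (hF : constantCoeff F = 0)
    (U : PowerSeries K) (n : ℕ) :
    ∀ j ≤ n, coeff j (psComp U F)
      = coeff j (Polynomial.aeval F (trunc (n + 1) U)) := by
  intro j hj
  rw [Polynomial.aeval_eq_sum_range' (natDegree_trunc_lt U n) F,
    psComp_coeff hF U (show j < n + 1 by omega), map_sum]
  refine Finset.sum_congr rfl fun i hi => ?_
  rw [coeff_smul, smul_eq_mul, coeff_trunc, if_pos (Finset.mem_range.1 hi)]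

lemma psComp_mul {F : PowerSeries K} (hF : constantCoeff F = 0)
    (U V : PowerSeries K) :
    psComp (U * V) F = psComp U F * psComp V F := by
  ext n
  set N := n + 1 with hN
  -- trunc of product agrees with product of truncs below N
  have hq : ∀ d < N, (trunc N U * trunc N V - trunc N (U * V)).coeff d = 0 := by
    intro d hd
    rw [Polynomial.coeff_sub, Polynomial.coeff_mul, coeff_trunc, if_pos hd,
      PowerSeries.coeff_mul, sub_eq_zero]
    refine Finset.sum_congr rfl fun p hp => ?_
    rw [Finset.HasAntidiagonal.mem_antidiagonal] at hp
    rw [coeff_trunc, coeff_trunc, if_pos (by omega), if_pos (by omega)]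
  obtain ⟨r, hr⟩ := Polynomial.X_pow_dvd_iff.2 hq
  have hzero : coeff n (Polynomial.aeval F (trunc N U * trunc N V)
      - Polynomial.aeval F (trunc N (U * V))) = 0 := by
    rw [← map_sub, hr, map_mul, map_pow, Polynomial.aeval_X, coeff_mul]
    refine Finset.sum_eq_zero fun p hp => ?_
    rw [Finset.HasAntidiagonal.mem_antidiagonal] at hp
    rw [coeffFpow hF (show p.1 < N by omega), zero_mul]
  have h1 : coeff n (psComp (U * V) F)
      = coeff n (Polynomial.aeval F (trunc N (U * V))) :=
    psComp_agree_aeval hF (U * V) n n le_rfl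
  have h2 : coeff n (psComp U F * psComp V F)
      = coeff n (Polynomial.aeval F (trunc N U) * Polynomial.aeval F (trunc N V)) := by
    rw [coeff_mul_congr _ _ _ n (psComp_agree_aeval hF V n),
      mul_comm (psComp U F), mul_comm (Polynomial.aeval F (trunc N U))]
    exact coeff_mul_congr _ _ _ n (psComp_agree_aeval hF U n)
  rw [map_sub, sub_eq_zero] at hzero
  rw [h1, h2, ← map_mul, ← hzero]

lemma psComp_X {F : PowerSeries K} (hF : constantCoeff F = 0) :
    psComp (X : PowerSeries K) F = F := by
  ext n
  rw [psComp, coeff_mk]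
  cases n with
  | zero => simp [hF, PowerSeries.coeff_zero_eq_constantCoeff]
  | succ m =>
    rw [Finset.sum_eq_single 1]
    · rw [coeff_one_X, pow_one, one_mul]
    · intro j _ hj
      rw [PowerSeries.coeff_X, if_neg hj, zero_mul]
    · intro h
      exact absurd (Finset.mem_range.2 (by omega)) h

lemma psComp_one {F : PowerSeries K} : psComp (1 : PowerSeries K) F = 1 := by
  ext n
  rw [psComp, coeff_mk, Finset.sum_eq_single 0]
  · simp
  · intro j _ hj
    rw [PowerSeries.coeff_one, if_neg hj, zero_mul]
  · intro h
    exact absurd (Finset.mem_range.2 (by omega)) h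

lemma psComp_zero {F : PowerSeries K} : psComp (0 : PowerSeries K) F = 0 := by
  ext n; simp [psComp]

lemma psComp_pow {F : PowerSeries K} (hF : constantCoeff F = 0)
    (U : PowerSeries K) (m : ℕ) :
    psComp (U ^ m) F = psComp U F ^ m := by
  induction m with
  | zero => simpa using psComp_one
  | succ m ih => rw [pow_succ, psComp_mul hF, ih, pow_succ]

/-- `sqe U = U(t²)`. -/
noncomputable def sqe (U : PowerSeries K) : PowerSeries K :=
  psComp U ((X : PowerSeries K) ^ 2)

lemma hX2 : constantCoeff ((X : PowerSeries K) ^ 2) = 0 := by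
  rw [map_pow, constantCoeff_X]; ring

lemma coeff_sqe (U : PowerSeries K) (n : ℕ) :
    coeff n (sqe U) = if n % 2 = 0 then coeff (n / 2) U else 0 := by
  rw [sqe, psComp_coeff hX2 U (show n < n + 1 by omega)]
  by_cases h : n % 2 = 0
  · rw [if_pos h, Finset.sum_eq_single (n / 2)]
    · rw [← pow_mul, PowerSeries.coeff_X_pow, if_pos (by omega), mul_one]
    · intro j _ hj
      rw [← pow_mul, PowerSeries.coeff_X_pow, if_neg (by omega), mul_zero]
    · intro hmem
      exact absurd (Finset.mem_range.2 (by omega)) hmem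
  · rw [if_neg h]
    refine Finset.sum_eq_zero fun j _ => ?_
    rw [← pow_mul, PowerSeries.coeff_X_pow, if_neg (by omega), mul_zero]

lemma oddPart_sqe (V : PowerSeries K) (m : ℕ) :
    (PowerSeries.mk fun ℓ => coeff (2 * ℓ + 1) ((X : PowerSeries K) ^ (2 * m + 1) * sqe V))
      = X ^ m * V := by
  ext ℓ
  rw [coeff_mk, PowerSeries.coeff_X_pow_mul', PowerSeries.coeff_X_pow_mul']
  by_cases h : m ≤ ℓ
  · rw [if_pos (show 2 * m + 1 ≤ 2 * ℓ + 1 by omega), if_pos h, coeff_sqe,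
      if_pos (show (2 * ℓ + 1 - (2 * m + 1)) % 2 = 0 by omega),
      show (2 * ℓ + 1 - (2 * m + 1)) / 2 = ℓ - m by omega]
  · rw [if_neg (show ¬ 2 * m + 1 ≤ 2 * ℓ + 1 by omega), if_neg h]

lemma oddPart_sqe_even (V : PowerSeries K) (m : ℕ) :
    (PowerSeries.mk fun ℓ => coeff (2 * ℓ + 1) ((X : PowerSeries K) ^ (2 * m + 2) * sqe V))
      = 0 := by
  ext ℓ
  rw [coeff_mk, PowerSeries.coeff_X_pow_mul', map_zero]
  by_cases h : 2 * m + 2 ≤ 2 * ℓ + 1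
  · rw [if_pos h, coeff_sqe, if_neg (by omega)]
  · rw [if_neg h]

lemma evenPart_sqe (V : PowerSeries K) (m : ℕ) :
    (PowerSeries.mk fun ℓ => coeff (2 * ℓ + 2) ((X : PowerSeries K) ^ (2 * m + 2) * sqe V))
      = X ^ m * V := by
  ext ℓ
  rw [coeff_mk, PowerSeries.coeff_X_pow_mul', PowerSeries.coeff_X_pow_mul']
  by_cases h : m ≤ ℓ
  · rw [if_pos (show 2 * m + 2 ≤ 2 * ℓ + 2 by omega), if_pos h, coeff_sqe,
      if_pos (show (2 * ℓ + 2 - (2 * m + 2)) % 2 = 0 by omega),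
      show (2 * ℓ + 2 - (2 * m + 2)) / 2 = ℓ - m by omega]
  · rw [if_neg (show ¬ 2 * m + 2 ≤ 2 * ℓ + 2 by omega), if_neg h]

lemma evenPart_sqe_odd (V : PowerSeries K) (m : ℕ) :
    (PowerSeries.mk fun ℓ => coeff (2 * ℓ + 2) ((X : PowerSeries K) ^ (2 * m + 1) * sqe V))
      = 0 := by
  ext ℓ
  rw [coeff_mk, PowerSeries.coeff_X_pow_mul', map_zero]
  by_cases h : 2 * m + 1 ≤ 2 * ℓ + 2
  · rw [if_pos h, coeff_sqe, if_neg (by omega)]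
  · rw [if_neg h]

lemma dar_vanish (b g f₁ f₂ : PowerSeries K)
    (hf₁ : constantCoeff f₁ = 0) (hf₂ : constantCoeff f₂ = 0)
    {n j : ℕ} (h : n < j) : dar b g f₁ f₂ n j = 0 := by
  have h1 : (X : PowerSeries K) ∣ f₁ := PowerSeries.X_dvd_iff.2 hf₁
  have h2 : (X : PowerSeries K) ∣ f₂ := PowerSeries.X_dvd_iff.2 hf₂
  have hFF : ∀ ℓ : ℕ, (X : PowerSeries K) ^ (2 * ℓ) ∣ (f₁ * f₂) ^ ℓ := fun ℓ => by
    rw [pow_mul]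
    exact pow_dvd_pow_of_dvd (by rw [pow_two]; exact mul_dvd_mul h1 h2) ℓ
  by_cases hp : j % 2 = 1
  · obtain ⟨ℓ, rfl⟩ : ∃ ℓ, j = 2 * ℓ + 1 := ⟨(j - 1) / 2, by omega⟩
    rw [dar_odd']
    refine PowerSeries.X_pow_dvd_iff.1 ?_ n h
    calc (X : PowerSeries K) ^ (2 * ℓ + 1)
        = X * X ^ (2 * ℓ) := by ring
      _ ∣ (X * g) * (f₁ * f₂) ^ ℓ :=
        mul_dvd_mul (dvd_mul_right X g) (hFF ℓ)
  · obtain ⟨ℓ, rfl⟩ : ∃ ℓ, j = 2 * ℓ + 2 := ⟨(j - 2) / 2, by omega⟩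
    rw [dar_even']
    refine PowerSeries.X_pow_dvd_iff.1 ?_ n h
    calc (X : PowerSeries K) ^ (2 * ℓ + 2)
        = (X * X) * X ^ (2 * ℓ) := by ring
      _ ∣ (X * g * f₁) * (f₁ * f₂) ^ ℓ :=
        mul_dvd_mul (mul_dvd_mul (dvd_mul_right X g) h1) (hFF ℓ)

lemma sum_range_two_mul {M : Type*} [AddCommMonoid M] (N : ℕ) (f : ℕ → M) :
    ∑ j ∈ range (2 * N), f j = ∑ ℓ ∈ range N, (f (2 * ℓ) + f (2 * ℓ + 1)) := by
  induction N with
  | zero => simp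
  | succ N ih =>
    rw [show 2 * (N + 1) = 2 * N + 1 + 1 by ring, Finset.sum_range_succ,
      Finset.sum_range_succ, ih, Finset.sum_range_succ]
    abel

lemma row (b g f₁ f₂ : PowerSeries K)
    (hf₁ : constantCoeff f₁ = 0) (hf₂ : constantCoeff f₂ = 0)
    (W : PowerSeries K) (n : ℕ) :
    ∑ j ∈ range (n + 1), dar b g f₁ f₂ n j * coeff j W
      = constantCoeff W * coeff n b
        + coeff n (X * g * psComp (PowerSeries.mk fun ℓ => coeff (2 * ℓ + 1) W) (f₁ * f₂))
        + coeff n (X * g * f₁ *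
            psComp (PowerSeries.mk fun ℓ => coeff (2 * ℓ + 2) W) (f₁ * f₂)) := by
  have hF : constantCoeff (f₁ * f₂) = 0 := by rw [map_mul, hf₁, zero_mul]
  have hext : ∑ j ∈ range (n + 1), dar b g f₁ f₂ n j * coeff j W
      = ∑ j ∈ range (2 * (n + 1) + 1), dar b g f₁ f₂ n j * coeff j W := by
    apply Finset.sum_subset (Finset.range_subset_range.2 (by omega))
    intro j _ hj
    rw [dar_vanish b g f₁ f₂ hf₁ hf₂ (by simpa using hj), zero_mul]
  rw [hext, Finset.sum_range_succ', sum_range_two_mul, Finset.sum_add_distrib]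
  have e0 : dar b g f₁ f₂ n 0 * coeff 0 W = constantCoeff W * coeff n b := by
    rw [dar_zero', PowerSeries.coeff_zero_eq_constantCoeff_apply, mul_comm]
  have e1 : ∑ ℓ ∈ range (n + 1), dar b g f₁ f₂ n (2 * ℓ + 1) * coeff (2 * ℓ + 1) W
      = coeff n (X * g * psComp (PowerSeries.mk fun ℓ => coeff (2 * ℓ + 1) W) (f₁ * f₂)) := by
    rw [coeff_mul_psComp hF]
    refine Finset.sum_congr rfl fun ℓ _ => ?_
    rw [dar_odd', coeff_mk, mul_comm]
  have e2 : ∑ ℓ ∈ range (n + 1), dar b g f₁ f₂ n (2 * ℓ + 1 + 1) * coeff (2 * ℓ + 1 + 1) W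
      = coeff n (X * g * f₁ *
          psComp (PowerSeries.mk fun ℓ => coeff (2 * ℓ + 2) W) (f₁ * f₂)) := by
    rw [coeff_mul_psComp hF]
    refine Finset.sum_congr rfl fun ℓ _ => ?_
    rw [show 2 * ℓ + 1 + 1 = 2 * ℓ + 2 from rfl, dar_even', coeff_mk, mul_comm]
  rw [e0, e1, e2]
  ring

end DARaux

/-- Product formula: double almost-Riordan arrays are closed under matrix product. -/
theorem dar_mul
    (b g f₁ f₂ : PowerSeries K)
    (hbe : ∀ k, coeff (2 * k + 1) b = 0)
    (hge : ∀ k, coeff (2 * k + 1) g = 0)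
    (hb0 : constantCoeff b ≠ 0)
    (hg0 : constantCoeff g ≠ 0)
    (hf₁o : ∀ k, coeff (2 * k) f₁ = 0)
    (hf₂o : ∀ k, coeff (2 * k) f₂ = 0)
    (hf₁1 : coeff 1 f₁ ≠ 0)
    (hf₂1 : coeff 1 f₂ ≠ 0)
    (c d h₁ h₂ : PowerSeries K)
    (hce : ∀ k, coeff (2 * k + 1) c = 0)
    (hde : ∀ k, coeff (2 * k + 1) d = 0)
    (hc0 : constantCoeff c ≠ 0)
    (hd0 : constantCoeff d ≠ 0)
    (hh₁o : ∀ k, coeff (2 * k) h₁ = 0)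
    (hh₂o : ∀ k, coeff (2 * k) h₂ = 0)
    (hh₁1 : coeff 1 h₁ ≠ 0)
    (hh₂1 : coeff 1 h₂ ≠ 0)
    (C' D' H₁ H₂ : PowerSeries K)
    (hC' : ∀ k, coeff k C' = coeff (2 * k + 2) c)
    (hD' : ∀ k, coeff k D' = coeff (2 * k) d)
    (hH₁ : ∀ k, coeff k H₁ = coeff (2 * k + 1) h₁)
    (hH₂ : ∀ k, coeff k H₂ = coeff (2 * k + 1) h₂) :
    ∀ n k : ℕ,
      ∑ j ∈ Finset.range (n + 1), dar b g f₁ f₂ n j * dar c d h₁ h₂ j k =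
        dar (C (constantCoeff c) * b + X * g * f₁ * psComp C' (f₁ * f₂))
          (g * psComp D' (f₁ * f₂))
          (f₁ * psComp H₁ (f₁ * f₂))
          (f₂ * psComp H₂ (f₁ * f₂)) n k := by
  intro n k
  have hf₁0 : constantCoeff f₁ = 0 := by
    have := hf₁o 0
    rwa [mul_zero, PowerSeries.coeff_zero_eq_constantCoeff_apply] at this
  have hf₂0 : constantCoeff f₂ = 0 := by
    have := hf₂o 0
    rwa [mul_zero, PowerSeries.coeff_zero_eq_constantCoeff_apply] at this
  have hF : constantCoeff (f₁ * f₂) = 0 := by rw [map_mul, hf₁0, zero_mul]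
  have hdd : d = sqe D' := by
    ext j
    rw [coeff_sqe]
    by_cases hj : j % 2 = 0
    · rw [if_pos hj, hD' (j / 2), show 2 * (j / 2) = j by omega]
    · rw [if_neg hj]
      have := hde (j / 2)
      rwa [show 2 * (j / 2) + 1 = j by omega] at this
  have hh1 : h₁ = X * sqe H₁ := by
    ext j
    cases j with
    | zero =>
      have hL : coeff 0 h₁ = 0 := by
        have := hh₁o 0
        rwa [mul_zero] at this
      rw [hL, PowerSeries.coeff_zero_eq_constantCoeff_apply, map_mul, constantCoeff_X, zero_mul]
    | succ m =>
      rw [PowerSeries.coeff_succ_X_mul, coeff_sqe]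
      by_cases hm : m % 2 = 0
      · rw [if_pos hm]
        have := hH₁ (m / 2)
        rw [show 2 * (m / 2) + 1 = m + 1 by omega] at this
        exact this.symm
      · rw [if_neg hm]
        have := hh₁o ((m + 1) / 2)
        rwa [show 2 * ((m + 1) / 2) = m + 1 by omega] at this
  have hh2 : h₂ = X * sqe H₂ := by
    ext j
    cases j with
    | zero =>
      have hL : coeff 0 h₂ = 0 := by
        have := hh₂o 0
        rwa [mul_zero] at this
      rw [hL, PowerSeries.coeff_zero_eq_constantCoeff_apply, map_mul, constantCoeff_X, zero_mul]
    | succ m =>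
      rw [PowerSeries.coeff_succ_X_mul, coeff_sqe]
      by_cases hm : m % 2 = 0
      · rw [if_pos hm]
        have := hH₂ (m / 2)
        rw [show 2 * (m / 2) + 1 = m + 1 by omega] at this
        exact this.symm
      · rw [if_neg hm]
        have := hh₂o ((m + 1) / 2)
        rwa [show 2 * ((m + 1) / 2) = m + 1 by omega] at this
  by_cases hk0 : k = 0
  · subst hk0
    simp only [dar_zero']
    rw [row b g f₁ f₂ hf₁0 hf₂0 c n]
    have hodd : (PowerSeries.mk fun ℓ => coeff (2 * ℓ + 1) c) = 0 := by
      ext ℓ; rw [coeff_mk, hce ℓ, map_zero]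
    have hev : (PowerSeries.mk fun ℓ => coeff (2 * ℓ + 2) c) = C' := by
      ext ℓ; rw [coeff_mk, hC' ℓ]
    rw [hodd, hev, psComp_zero, mul_zero, map_zero, map_add, PowerSeries.coeff_C_mul]
    ring
  · rcases Nat.even_or_odd k with ⟨m, hm⟩ | ⟨m, hm⟩
    · -- k even, k = 2*m'+2
      obtain ⟨m', rfl⟩ : ∃ m', m = m' + 1 := ⟨m - 1, by omega⟩
      have hk : k = 2 * m' + 2 := by omega
      subst hk
      simp only [dar_even']
      rw [row b g f₁ f₂ hf₁0 hf₂0 (X * d * h₁ * (h₁ * h₂) ^ m') n]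
      have hW : X * d * h₁ * (h₁ * h₂) ^ m'
          = X ^ (2 * m' + 2) * sqe (D' * H₁ * (H₁ * H₂) ^ m') := by
        rw [hdd, hh1, hh2]
        simp only [sqe]
        rw [psComp_mul hX2, psComp_mul hX2, psComp_pow hX2, psComp_mul hX2]
        ring
      rw [hW, oddPart_sqe_even, evenPart_sqe, psComp_zero, mul_zero, map_zero]
      have hc0' : constantCoeff
          ((X : PowerSeries K) ^ (2 * m' + 2) * sqe (D' * H₁ * (H₁ * H₂) ^ m')) = 0 := by
        rw [map_mul, map_pow, constantCoeff_X, zero_pow (by omega), zero_mul]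
      rw [hc0', zero_mul, zero_add, zero_add]
      have hsub : psComp ((X : PowerSeries K) ^ m' * (D' * H₁ * (H₁ * H₂) ^ m')) (f₁ * f₂)
          = (f₁ * f₂) ^ m' * (psComp D' (f₁ * f₂) * psComp H₁ (f₁ * f₂)
              * (psComp H₁ (f₁ * f₂) * psComp H₂ (f₁ * f₂)) ^ m') := by
        rw [psComp_mul hF, psComp_pow hF, psComp_X hF, psComp_mul hF, psComp_mul hF,
          psComp_pow hF, psComp_mul hF]
      rw [hsub]
      congr 1
      ring
    · -- k odd, k = 2*m+1
      subst hm
      simp only [dar_odd']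
      rw [row b g f₁ f₂ hf₁0 hf₂0 (X * d * (h₁ * h₂) ^ m) n]
      have hW : X * d * (h₁ * h₂) ^ m
          = X ^ (2 * m + 1) * sqe (D' * (H₁ * H₂) ^ m) := by
        rw [hdd, hh1, hh2]
        simp only [sqe]
        rw [psComp_mul hX2, psComp_pow hX2, psComp_mul hX2]
        ring
      rw [hW, oddPart_sqe, evenPart_sqe_odd, psComp_zero, mul_zero, map_zero]
      have hc0' : constantCoeff
          ((X : PowerSeries K) ^ (2 * m + 1) * sqe (D' * (H₁ * H₂) ^ m)) = 0 := by
        rw [map_mul, map_pow, constantCoeff_X, zero_pow (by omega), zero_mul]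
      rw [hc0', zero_mul, zero_add, add_zero]
      have hsub : psComp ((X : PowerSeries K) ^ m * (D' * (H₁ * H₂) ^ m)) (f₁ * f₂)
          = (f₁ * f₂) ^ m * (psComp D' (f₁ * f₂)
              * (psComp H₁ (f₁ * f₂) * psComp H₂ (f₁ * f₂)) ^ m) := by
        rw [psComp_mul hF, psComp_pow hF, psComp_X hF, psComp_mul hF,
          psComp_pow hF, psComp_mul hF]
      rw [hsub]
      congr 1
      ring
end

section
/- A-sequence recurrence for double almost-Riordan arrays: Suppose Ã ∈ K[[t]] satisfies f₁·f₂ = t²·(Ã∘(f₁f₂)), and set a_j := [t^j]Ã (the A-sequence of (b|g;f₁,f₂)). Then for all n ≥ 2 and all k ≥ 3, d_{n,k} = a₀·d_{n−2,k−2} + a₁·d_{n−2,k} + a₂·d_{n−2,k+2} + ⋯ = Σ_{j≥0} a_j·d_{n−2, k+2(j−1)}, where the sum has only finitely many nonzero terms since d_{m,l} = 0 whenever l > m. -/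
open PowerSeries

variable {K : Type*} [Field K]

/-- the column series, valid for `k ≥ 1` -/
noncomputable def colS (g f₁ f₂ : PowerSeries K) (k : ℕ) : PowerSeries K :=
  if k % 2 = 1 then X * g * (f₁ * f₂) ^ ((k - 1) / 2)
  else X * g * f₁ * (f₁ * f₂) ^ ((k - 2) / 2)

lemma dar_eq_colS (b g f₁ f₂ : PowerSeries K) (n k : ℕ) (hk : 1 ≤ k) :
    dar b g f₁ f₂ n k = coeff n (colS g f₁ f₂ k) := by
  unfold dar colS
  rw [if_neg (by omega)]
  split_ifs <;> rfl

lemma colS_step (g f₁ f₂ : PowerSeries K) (k : ℕ) (hk : 1 ≤ k) :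
    colS g f₁ f₂ (k + 2) = colS g f₁ f₂ k * (f₁ * f₂) := by
  unfold colS
  have h2 : (k + 2) % 2 = k % 2 := by omega
  rw [h2]
  rcases Nat.mod_two_eq_zero_or_one k with hm | hm
  · rw [if_neg (by omega), if_neg (by omega)]
    have : (k + 2 - 2) / 2 = (k - 2) / 2 + 1 := by omega
    rw [this, pow_succ]; ring
  · rw [if_pos hm, if_pos hm]
    have : (k + 2 - 1) / 2 = (k - 1) / 2 + 1 := by omega
    rw [this, pow_succ]; ring

lemma colS_add (g f₁ f₂ : PowerSeries K) (k : ℕ) (hk : 1 ≤ k) (j : ℕ) :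
    colS g f₁ f₂ (k + 2 * j) = colS g f₁ f₂ k * (f₁ * f₂) ^ j := by
  induction j with
  | zero => simp
  | succ j ih =>
      have : k + 2 * (j + 1) = (k + 2 * j) + 2 := by ring
      rw [this, colS_step g f₁ f₂ _ (by omega), ih, pow_succ, mul_assoc]

/-- triangularity -/
lemma dar_tri (b g f₁ f₂ : PowerSeries K)
    (hf₁0 : constantCoeff f₁ = 0) (hf₂0 : constantCoeff f₂ = 0)
    (m l : ℕ) (h : m < l) : dar b g f₁ f₂ m l = 0 := by
  have hl : 1 ≤ l := by omega
  obtain ⟨u, hu⟩ : (X : PowerSeries K) ∣ f₁ := X_dvd_iff.2 hf₁0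
  obtain ⟨v, hv⟩ : (X : PowerSeries K) ∣ f₂ := X_dvd_iff.2 hf₂0
  have hF : f₁ * f₂ = X ^ 2 * (u * v) := by rw [hu, hv]; ring
  rw [dar_eq_colS _ _ _ _ _ _ hl]
  unfold colS
  split_ifs with hm
  · have : (X : PowerSeries K) * g * (f₁ * f₂) ^ ((l - 1) / 2)
        = X ^ (2 * ((l - 1) / 2) + 1) * (g * (u * v) ^ ((l - 1) / 2)) := by
      rw [hF, mul_pow, ← pow_mul, pow_succ]
      ring
    rw [this, coeff_X_pow_mul', if_neg (by omega)]
  · have hl2 : 2 ≤ l := by omega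
    have : (X : PowerSeries K) * g * f₁ * (f₁ * f₂) ^ ((l - 2) / 2)
        = X ^ (2 * ((l - 2) / 2) + 2) * (g * u * (u * v) ^ ((l - 2) / 2)) := by
      rw [hF, hu, mul_pow, ← pow_mul]
      ring
    rw [this, coeff_X_pow_mul', if_neg (by omega)]


/-- A-sequence recurrence for double almost-Riordan arrays. -/
theorem dar_A_seq
    (b g f₁ f₂ : PowerSeries K)
    (hbe : ∀ k, coeff (2 * k + 1) b = 0)
    (hge : ∀ k, coeff (2 * k + 1) g = 0)
    (hb0 : constantCoeff b ≠ 0)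
    (hg0 : constantCoeff g ≠ 0)
    (hf₁o : ∀ k, coeff (2 * k) f₁ = 0)
    (hf₂o : ∀ k, coeff (2 * k) f₂ = 0)
    (hf₁1 : coeff 1 f₁ ≠ 0)
    (hf₂1 : coeff 1 f₂ ≠ 0)
    (A : PowerSeries K)
    (hA : f₁ * f₂ = X ^ 2 * psComp A (f₁ * f₂)) :
    ∀ n k : ℕ, 2 ≤ n → 3 ≤ k →
      dar b g f₁ f₂ n k =
        ∑ᶠ j : ℕ, coeff j A * dar b g f₁ f₂ (n - 2) (k + 2 * j - 2) := by
  intro n k hn hk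
  have hf₁0 : constantCoeff f₁ = 0 := by
    have := hf₁o 0; simpa using this
  have hf₂0 : constantCoeff f₂ = 0 := by
    have := hf₂o 0; simpa using this
  obtain ⟨u, hu⟩ : (X : PowerSeries K) ∣ f₁ := X_dvd_iff.2 hf₁0
  obtain ⟨v, hv⟩ : (X : PowerSeries K) ∣ f₂ := X_dvd_iff.2 hf₂0
  have hF : f₁ * f₂ = X ^ 2 * (u * v) := by rw [hu, hv]; ring
  have hFlow : ∀ (m j : ℕ), m < 2 * j → coeff m ((f₁ * f₂) ^ j) = 0 := by
    intro m j hmj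
    have : (f₁ * f₂) ^ j = X ^ (2 * j) * (u * v) ^ j := by
      rw [hF, mul_pow, ← pow_mul]
    rw [this, coeff_X_pow_mul', if_neg (by omega)]
  -- the finite truncation of psComp A F up to degree n
  set F := f₁ * f₂ with hFdef
  set T : PowerSeries K := ∑ j ∈ Finset.range (n + 1), C (coeff j A) * F ^ j with hT
  have hcoeffT : ∀ m : ℕ, m ≤ n → coeff m (psComp A F) = coeff m T := by
    intro m hm
    rw [hT, map_sum]
    simp only [coeff_C_mul]
    rw [psComp, coeff_mk]
    apply Finset.sum_subset
    · intro x hx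
      simp only [Finset.mem_range] at hx ⊢; omega
    · intro x hx hx2
      simp only [Finset.mem_range] at hx hx2
      rw [hFlow m x (by omega), mul_zero]
  -- column k = column (k-2) * F
  have hcolk : colS g f₁ f₂ k = colS g f₁ f₂ (k - 2) * F := by
    conv_lhs => rw [show k = (k - 2) + 2 by omega]
    rw [colS_step _ _ _ _ (by omega)]
  have hcol : dar b g f₁ f₂ n k = coeff n (colS g f₁ f₂ (k - 2) * F) := by
    rw [dar_eq_colS _ _ _ _ _ _ (by omega), hcolk]
  rw [hcol, hA]
  have hre : colS g f₁ f₂ (k - 2) * (X ^ 2 * psComp A F)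
      = X ^ 2 * (colS g f₁ f₂ (k - 2) * psComp A F) := by ring
  rw [hre, coeff_X_pow_mul', if_pos (by omega)]
  -- replace psComp by T in the product coefficient at n - 2
  have hprod : coeff (n - 2) (colS g f₁ f₂ (k - 2) * psComp A F)
      = coeff (n - 2) (colS g f₁ f₂ (k - 2) * T) := by
    rw [coeff_mul, coeff_mul]
    apply Finset.sum_congr rfl
    intro p hp
    rw [Finset.HasAntidiagonal.mem_antidiagonal] at hp
    rw [hcoeffT p.2 (by omega)]
  rw [hprod, hT, Finset.mul_sum, map_sum]
  -- identify each term
  have hterm : ∀ j ∈ Finset.range (n + 1),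
      coeff (n - 2) (colS g f₁ f₂ (k - 2) * (C (coeff j A) * F ^ j))
        = coeff j A * dar b g f₁ f₂ (n - 2) (k + 2 * j - 2) := by
    intro j _
    have h1 : colS g f₁ f₂ (k - 2) * (C (coeff j A) * F ^ j)
        = C (coeff j A) * (colS g f₁ f₂ (k - 2) * F ^ j) := by ring
    rw [h1, coeff_C_mul, ← colS_add g f₁ f₂ (k - 2) (by omega) j,
      ← dar_eq_colS b g f₁ f₂ (n - 2) _ (by omega)]
    congr 2
    omega
  rw [Finset.sum_congr rfl hterm]
  -- now the finsum
  symm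
  apply finsum_eq_finset_sum_of_support_subset
  intro j hj
  simp only [Function.mem_support, Finset.coe_range, Set.mem_Iio] at hj ⊢
  by_contra hjn
  push_neg at hjn
  have : dar b g f₁ f₂ (n - 2) (k + 2 * j - 2) = 0 :=
    dar_tri b g f₁ f₂ hf₁0 hf₂0 _ _ (by omega)
  rw [this, mul_zero] at hj
  exact hj rfl
end

section
/- W-sequence recurrence for double almost-Riordan arrays: Suppose W̃ ∈ K[[t]] satisfies b₀·f₂·(b − b₀) = b₂·t²·b·f₂ + t³·g·(b₀·(W̃∘(f₁f₂)) − b₂), where b₂ = [t²]b, and set w_j := [t^j]W̃ (so w₀ = b₂/b₀). Then for all n ≥ 2, d_{n,0} = w₀·d_{n−2,0} + w₁·d_{n−2,2} + w₂·d_{n−2,4} + ⋯ = Σ_{j≥0} w_j·d_{n−2,2j}, where the sum has only finitely many nonzero terms since d_{m,l} = 0 whenever l > m. -/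
open PowerSeries

variable {K : Type*} [Field K]

lemma coeff_zero_of_X_pow_dvd {p : PowerSeries K} {j m : ℕ} (h : X ^ j ∣ p) (hm : m < j) :
    coeff m p = 0 := X_pow_dvd_iff.mp h m hm

/-- auxiliary series: a "truncated" version of the infinite sum `Σ_j c j • P j`. -/
noncomputable def Ssum (c : ℕ → K) (P : ℕ → PowerSeries K) : PowerSeries K :=
  PowerSeries.mk fun m => ∑ j ∈ Finset.range (m + 1), c j * coeff m (P j)

lemma coeff_Ssum (c : ℕ → K) (P : ℕ → PowerSeries K)
    (hP : ∀ j m, m < j → coeff m (P j) = 0) {m N : ℕ} (hN : m < N) :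
    coeff m (Ssum c P) = ∑ j ∈ Finset.range N, c j * coeff m (P j) := by
  rw [Ssum, coeff_mk]
  apply Finset.sum_subset (Finset.range_subset_range.mpr (by omega))
  intro j hj hj2
  rw [hP j m (by simp only [Finset.mem_range] at hj hj2 ⊢; omega), mul_zero]

lemma coeff_mul_Ssum (A : PowerSeries K) (c : ℕ → K) (P : ℕ → PowerSeries K)
    (hP : ∀ j m, m < j → coeff m (P j) = 0) (n : ℕ) :
    coeff n (A * Ssum c P) = ∑ j ∈ Finset.range (n + 1), c j * coeff n (A * P j) := by
  rw [coeff_mul]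
  have step : ∀ p ∈ Finset.HasAntidiagonal.antidiagonal n,
      coeff p.1 A * coeff p.2 (Ssum c P)
        = ∑ j ∈ Finset.range (n + 1), c j * (coeff p.1 A * coeff p.2 (P j)) := by
    intro p hp
    have hp2 : p.2 ≤ n := by
      have := Finset.HasAntidiagonal.mem_antidiagonal.mp hp; omega
    rw [coeff_Ssum c P hP (show p.2 < n + 1 by omega), Finset.mul_sum]
    apply Finset.sum_congr rfl
    intro j _; ring
  rw [Finset.sum_congr rfl step, Finset.sum_comm]
  apply Finset.sum_congr rfl
  intro j _
  rw [coeff_mul, Finset.mul_sum]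

lemma psComp_eq_Ssum (W f₁ f₂ : PowerSeries K)
    (hf₁0 : constantCoeff f₁ = 0) (hf₂0 : constantCoeff f₂ = 0) :
    psComp W (f₁ * f₂) = C (coeff 0 W)
      + f₂ * Ssum (fun j => coeff (j + 1) W) (fun j => f₁ * (f₁ * f₂) ^ j) := by
  have hX1 : (X : PowerSeries K) ∣ f₁ := X_dvd_iff.mpr hf₁0
  have hX2 : (X : PowerSeries K) ∣ f₂ := X_dvd_iff.mpr hf₂0
  have hXh : (X : PowerSeries K) ∣ f₁ * f₂ := hX1.mul_right f₂
  have hP : ∀ j m, m < j → coeff m (f₁ * (f₁ * f₂) ^ j) = 0 := fun j m hm =>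
    coeff_zero_of_X_pow_dvd ((pow_dvd_pow_of_dvd hXh j).mul_left f₁) hm
  ext n
  rw [map_add, coeff_mul_Ssum f₂ _ _ hP n, psComp, coeff_mk]
  have hfix : ∀ j : ℕ, coeff n (f₂ * (f₁ * (f₁ * f₂) ^ j)) = coeff n ((f₁ * f₂) ^ (j + 1)) := by
    intro j; congr 1; ring
  calc ∑ j ∈ Finset.range (n + 1), coeff j W * coeff n ((f₁ * f₂) ^ j)
      = (∑ j ∈ Finset.range n, coeff (j + 1) W * coeff n ((f₁ * f₂) ^ (j + 1)))
          + coeff 0 W * coeff n ((f₁ * f₂) ^ 0) := Finset.sum_range_succ' _ n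
    _ = coeff n (C (coeff 0 W))
          + ∑ j ∈ Finset.range (n + 1),
              coeff (j + 1) W * coeff n (f₂ * (f₁ * (f₁ * f₂) ^ j)) := by
        rw [Finset.sum_range_succ]
        simp only [hfix, pow_zero, coeff_one, coeff_C]
        rw [coeff_zero_of_X_pow_dvd (pow_dvd_pow_of_dvd hXh (n + 1)) (by omega)]
        by_cases hn : n = 0 <;> simp [hn]

/-- W-sequence recurrence for double almost-Riordan arrays. -/
theorem dar_W_seq
    (b g f₁ f₂ : PowerSeries K)
    (hbe : ∀ k, coeff (2 * k + 1) b = 0)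
    (hge : ∀ k, coeff (2 * k + 1) g = 0)
    (hb0 : constantCoeff b ≠ 0)
    (hg0 : constantCoeff g ≠ 0)
    (hf₁o : ∀ k, coeff (2 * k) f₁ = 0)
    (hf₂o : ∀ k, coeff (2 * k) f₂ = 0)
    (hf₁1 : coeff 1 f₁ ≠ 0)
    (hf₂1 : coeff 1 f₂ ≠ 0)
    (W : PowerSeries K)
    (hW : C (constantCoeff b) * f₂ * (b - C (constantCoeff b)) =
        C (coeff 2 b) * X ^ 2 * b * f₂ +
          X ^ 3 * g * (C (constantCoeff b) * psComp W (f₁ * f₂) - C (coeff 2 b))) :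
    ∀ n : ℕ, 2 ≤ n →
      dar b g f₁ f₂ n 0 =
        ∑ᶠ j : ℕ, coeff j W * dar b g f₁ f₂ (n - 2) (2 * j) := by
  have hf₁0 : constantCoeff f₁ = 0 := by
    rw [← coeff_zero_eq_constantCoeff]; simpa using hf₁o 0
  have hf₂0 : constantCoeff f₂ = 0 := by
    rw [← coeff_zero_eq_constantCoeff]; simpa using hf₂o 0
  have hX1 : (X : PowerSeries K) ∣ f₁ := X_dvd_iff.mpr hf₁0
  have hX2 : (X : PowerSeries K) ∣ f₂ := X_dvd_iff.mpr hf₂0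
  have hXh : (X : PowerSeries K) ^ 2 ∣ f₁ * f₂ := by rw [sq]; exact mul_dvd_mul hX1 hX2
  have hP : ∀ j m, m < j → coeff m (f₁ * (f₁ * f₂) ^ j) = 0 := fun j m hm =>
    coeff_zero_of_X_pow_dvd
      (((pow_dvd_pow_of_dvd (X_dvd_iff.mpr (by simp [map_mul, hf₁0])) j)).mul_left f₁) hm
  set w₀ := coeff 0 W with hw₀
  set S := Ssum (fun j => coeff (j + 1) W) (fun j => f₁ * (f₁ * f₂) ^ j) with hS
  -- step A: b₀ w₀ = b₂
  have hb1 : coeff 1 b = 0 := by simpa using hbe 0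
  have hb3 : coeff 3 b = 0 := by simpa using hbe 1
  have hf20 : coeff 0 f₂ = 0 := by simpa using hf₂o 0
  have hf22 : coeff 2 f₂ = 0 := by simpa using hf₂o 1
  have hT0 : coeff 0 (psComp W (f₁ * f₂)) = coeff 0 W := by simp [psComp]
  have hcw : w₀ = constantCoeff W := by
    rw [hw₀, coeff_zero_eq_constantCoeff]
  have key : coeff 2 b = constantCoeff b * w₀ := by
    have h3 := congrArg (coeff 3) hW
    simp [coeff_mul, Finset.Nat.sum_antidiagonal_eq_sum_range_succ_mk,
      Finset.sum_range_succ, coeff_X_pow, coeff_C, hb1, hb3, hf20, hf22, hT0,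
      coeff_zero_eq_constantCoeff] at h3
    have h5 : constantCoeff g *
        (constantCoeff b * constantCoeff W - coeff 2 b) = constantCoeff g * 0 := by
      linear_combination -h3
    have h6 := mul_left_cancel₀ hg0 h5
    rw [hcw]
    linear_combination -h6
  -- step B & C: the fundamental series identity
  have hCb : (C (constantCoeff b)) ≠ 0 := fun hc => hb0 (by simpa using congrArg (constantCoeff) hc)
  have hf2ne : f₂ ≠ 0 := fun hc => hf₂1 (by simp [hc])
  have hEq : b - C (constantCoeff b) = (C w₀ * b) * X ^ 2 + (X * g * S) * X ^ 2 := by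
    rw [psComp_eq_Ssum W f₁ f₂ hf₁0 hf₂0, key, map_mul] at hW
    apply mul_left_cancel₀ hf2ne
    apply mul_left_cancel₀ hCb
    linear_combination hW
  -- coefficient extraction
  intro n hn
  obtain ⟨m, rfl⟩ : ∃ m, n = m + 2 := ⟨n - 2, by omega⟩
  have hvan : ∀ j m', m' < 2 * j + 2 → coeff m' (X * g * f₁ * (f₁ * f₂) ^ j) = 0 := by
    intro j m' hm'
    refine coeff_zero_of_X_pow_dvd (j := 2 * j + 2) ?_ hm'
    have h1 : (X : PowerSeries K) ^ (2 * j + 2) = X * 1 * X * (X ^ 2) ^ j := by ring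
    rw [h1]
    exact mul_dvd_mul (mul_dvd_mul (mul_dvd_mul dvd_rfl (one_dvd g)) hX1)
      (pow_dvd_pow_of_dvd hXh j)
  have hdar : ∀ j, dar b g f₁ f₂ m (2 * (j + 1)) = coeff m (X * g * f₁ * (f₁ * f₂) ^ j) := by
    intro j
    rw [dar, if_neg (by omega), if_neg (by omega)]
    have : (2 * (j + 1) - 2) / 2 = j := by omega
    rw [this]
  have hsupp : Function.support (fun j => coeff j W * dar b g f₁ f₂ (m + 2 - 2) (2 * j))
      ⊆ ↑(Finset.range (m + 1)) := by
    intro j hj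
    simp only [Function.mem_support, show m + 2 - 2 = m from rfl] at hj
    simp only [Finset.coe_range, Set.mem_Iio]
    by_contra hjm
    push_neg at hjm
    apply hj
    obtain ⟨j', rfl⟩ : ∃ j', j = j' + 1 := ⟨j - 1, by omega⟩
    rw [hdar j', hvan j' m (by omega), mul_zero]
  rw [finsum_eq_sum_of_support_subset _ hsupp]
  have hms : m + 2 - 2 = m := by omega
  rw [hms]
  have hL : dar b g f₁ f₂ (m + 2) 0 = coeff (m + 2) b := by rw [dar, if_pos rfl]
  rw [hL]
  have hcard : coeff (m + 2) b = w₀ * coeff m b + coeff m (X * g * S) := by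
    have h4 := congrArg (coeff (m + 2)) hEq
    rw [map_sub, map_add, coeff_mul_X_pow, coeff_mul_X_pow, coeff_C, if_neg (by omega),
      coeff_C_mul] at h4
    linear_combination h4
  rw [hcard]
  rw [Finset.sum_range_succ']
  have hdar0 : dar b g f₁ f₂ m (2 * 0) = coeff m b := by rw [show 2*0 = 0 from rfl, dar, if_pos rfl]
  rw [hdar0]
  have hR : coeff m (X * g * S) = ∑ j ∈ Finset.range m,
      coeff (j + 1) W * dar b g f₁ f₂ m (2 * (j + 1)) := by
    rw [show X * g * S = (X * g) * S by ring, coeff_mul_Ssum (X * g) _ _ hP m,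
      Finset.sum_range_succ]
    have hlast : coeff m ((X * g) * (f₁ * (f₁ * f₂) ^ m)) = 0 := by
      rw [show (X * g) * (f₁ * (f₁ * f₂) ^ m) = X * g * f₁ * (f₁ * f₂) ^ m by ring]
      exact hvan m m (by omega)
    rw [hlast, mul_zero, add_zero]
    apply Finset.sum_congr rfl
    intro j _
    rw [hdar j]
    congr 1
    ring
  rw [hR]
  ring
end

section
/- Column generating functions of the compression of a double almost-Riordan array: Define the compression of D = (b|g;f₁,f₂) by d̂_{n,k} := d_{2n−k,k} for 0 ≤ k ≤ n, and define b̂, ĝ, f̂₁, f̂₂ ∈ K[[t]] by [t^k]b̂ = b_{2k}, [t^k]ĝ = g_{2k}, [t^{k+1}]f̂ᵢ = f_{i,2k+1} for k ≥ 0 and [t⁰]f̂ᵢ = 0 (i = 1,2). Then for all 0 ≤ k ≤ n: d̂_{n,0} = [t^n]b̂; for odd k = 2ℓ+1, d̂_{n,k} = [t^n]( t·ĝ·(f̂₁f̂₂)^ℓ ); and for even k = 2ℓ+2 ≥ 2, d̂_{n,k} = [t^n]( t·ĝ·f̂₁·(f̂₁f̂₂)^ℓ ). -/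
open PowerSeries

variable {K : Type*} [Field K]

structure PsRel (a : ℕ) (A Ah : PowerSeries K) : Prop where
  lowA : ∀ m, m < a → coeff m A = 0
  lowAh : ∀ m, m < a → coeff m Ah = 0
  ev : ∀ j, coeff (a + 2*j) A = coeff (a + j) Ah
  od : ∀ j, coeff (a + 2*j + 1) A = 0

lemma coeff_mul_range (A B : PowerSeries K) (m : ℕ) :
    coeff m (A * B) = ∑ i ∈ Finset.range (m+1), coeff i A * coeff (m - i) B := by
  rw [coeff_mul, Finset.Nat.sum_antidiagonal_eq_sum_range_succ_mk]

theorem PsRel.mul {a b : ℕ} {A Ah B Bh : PowerSeries K}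
    (hA : PsRel a A Ah) (hB : PsRel b B Bh) : PsRel (a+b) (A*B) (Ah*Bh) := by
  constructor
  · intro m hm
    rw [coeff_mul_range]
    apply Finset.sum_eq_zero
    intro i hi
    simp only [Finset.mem_range] at hi
    by_cases h : i < a
    · rw [hA.lowA i h, zero_mul]
    · rw [hB.lowA (m - i) (by omega), mul_zero]
  · intro m hm
    rw [coeff_mul_range]
    apply Finset.sum_eq_zero
    intro i hi
    simp only [Finset.mem_range] at hi
    by_cases h : i < a
    · rw [hA.lowAh i h, zero_mul]
    · rw [hB.lowAh (m - i) (by omega), mul_zero]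
  · intro j
    rw [coeff_mul_range, coeff_mul_range]
    have hL : ∑ i ∈ Finset.range (a + b + 2*j + 1),
        coeff i A * coeff (a + b + 2*j - i) B
        = ∑ p ∈ Finset.range (j+1), coeff (a + 2*p) A * coeff (b + 2*(j - p)) B := by
      rw [← Finset.sum_subset
        (s₁ := Finset.image (fun p => a + 2*p) (Finset.range (j+1)))
        (by intro x hx
            simp only [Finset.mem_image, Finset.mem_range] at hx
            obtain ⟨p, hp, rfl⟩ := hx
            simp only [Finset.mem_range]; omega)
        (by intro x hx hx'
            simp only [Finset.mem_range] at hx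
            simp only [Finset.mem_image, Finset.mem_range, not_exists, not_and] at hx'
            by_cases h1 : x < a
            · rw [hA.lowA x h1, zero_mul]
            · by_cases h2 : (x - a) % 2 = 1
              · have hx2 : x = a + 2*((x-a)/2) + 1 := by omega
                rw [hx2, hA.od, zero_mul]
              · by_cases h3 : (x - a)/2 ≤ j
                · exact absurd (hx' ((x-a)/2) (by omega)) (by omega)
                · rw [hB.lowA (a + b + 2*j - x) (by omega), mul_zero])]
      rw [Finset.sum_image (by intro x _ y _ h; simp only at h; omega)]
      apply Finset.sum_congr rfl
      intro p hp
      simp only [Finset.mem_range] at hp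
      have : a + b + 2*j - (a + 2*p) = b + 2*(j - p) := by omega
      rw [this]
    have hR : ∑ i ∈ Finset.range (a + b + j + 1),
        coeff i Ah * coeff (a + b + j - i) Bh
        = ∑ p ∈ Finset.range (j+1), coeff (a + p) Ah * coeff (b + (j - p)) Bh := by
      rw [← Finset.sum_subset
        (s₁ := Finset.image (fun p => a + p) (Finset.range (j+1)))
        (by intro x hx
            simp only [Finset.mem_image, Finset.mem_range] at hx
            obtain ⟨p, hp, rfl⟩ := hx
            simp only [Finset.mem_range]; omega)
        (by intro x hx hx'
            simp only [Finset.mem_range] at hx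
            simp only [Finset.mem_image, Finset.mem_range, not_exists, not_and] at hx'
            by_cases h1 : x < a
            · rw [hA.lowAh x h1, zero_mul]
            · by_cases h3 : x - a ≤ j
              · exact absurd (hx' (x-a) (by omega)) (by omega)
              · rw [hB.lowAh (a + b + j - x) (by omega), mul_zero])]
      rw [Finset.sum_image (by intro x _ y _ h; simp only at h; omega)]
      apply Finset.sum_congr rfl
      intro p hp
      simp only [Finset.mem_range] at hp
      have : a + b + j - (a + p) = b + (j - p) := by omega
      rw [this]
    rw [hL, hR]
    apply Finset.sum_congr rfl
    intro p _
    rw [hA.ev p, hB.ev (j - p)]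
  · intro j
    rw [coeff_mul_range]
    apply Finset.sum_eq_zero
    intro i hi
    simp only [Finset.mem_range] at hi
    by_cases h1 : i < a
    · rw [hA.lowA i h1, zero_mul]
    · by_cases h2 : (i - a) % 2 = 1
      · have hx2 : i = a + 2*((i-a)/2) + 1 := by omega
        rw [hx2, hA.od, zero_mul]
      · by_cases h3 : (i - a)/2 ≤ j
        · have : a + b + 2*j + 1 - i = b + 2*(j - (i-a)/2) + 1 := by omega
          rw [this, hB.od, mul_zero]
        · rw [hB.lowA (a + b + 2*j + 1 - i) (by omega), mul_zero]

lemma PsRel.cast {a a' : ℕ} {A Ah : PowerSeries K} (h : a = a') (hr : PsRel a A Ah) :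
    PsRel a' A Ah := h ▸ hr

lemma PsRel.one : PsRel (K := K) 0 1 1 := by
  refine ⟨by omega, by omega, ?_, ?_⟩
  · intro j; rcases j with _|j <;> simp [coeff_one]
  · intro j; simp [coeff_one]

theorem PsRel.pow {a : ℕ} {A Ah : PowerSeries K} (hA : PsRel a A Ah) (l : ℕ) :
    PsRel (l*a) (A^l) (Ah^l) := by
  induction l with
  | zero => simpa using PsRel.one
  | succ n ih =>
      have := ih.mul hA
      rw [← pow_succ, ← pow_succ] at this
      exact this.cast (by ring)

lemma PsRel.X : PsRel (K := K) 1 X X := by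
  refine ⟨?_, ?_, ?_, ?_⟩
  · intro m hm; interval_cases m; simp
  · intro m hm; interval_cases m; simp
  · intro j; rcases j with _|j <;> simp [coeff_X]
  · intro j; simp [coeff_X]

/-- Column generating functions of the compression of a double almost-Riordan array. -/
theorem dar_compression_columns
    (b g f₁ f₂ : PowerSeries K)
    (hbe : ∀ k, coeff (2 * k + 1) b = 0)
    (hge : ∀ k, coeff (2 * k + 1) g = 0)
    (hb0 : constantCoeff b ≠ 0)
    (hg0 : constantCoeff g ≠ 0)
    (hf₁o : ∀ k, coeff (2 * k) f₁ = 0)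
    (hf₂o : ∀ k, coeff (2 * k) f₂ = 0)
    (hf₁1 : coeff 1 f₁ ≠ 0)
    (hf₂1 : coeff 1 f₂ ≠ 0)
    (bh gh f₁h f₂h : PowerSeries K)
    (hbh : ∀ k, coeff k bh = coeff (2 * k) b)
    (hgh : ∀ k, coeff k gh = coeff (2 * k) g)
    (hf₁h0 : constantCoeff f₁h = 0)
    (hf₁h : ∀ k, coeff (k + 1) f₁h = coeff (2 * k + 1) f₁)
    (hf₂h0 : constantCoeff f₂h = 0)
    (hf₂h : ∀ k, coeff (k + 1) f₂h = coeff (2 * k + 1) f₂) :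
    ∀ n : ℕ,
      dar b g f₁ f₂ (2 * n) 0 = coeff n bh ∧
      (∀ l : ℕ, 2 * l + 1 ≤ n →
        dar b g f₁ f₂ (2 * n - (2 * l + 1)) (2 * l + 1) =
          coeff n (X * gh * (f₁h * f₂h) ^ l)) ∧
      (∀ l : ℕ, 2 * l + 2 ≤ n →
        dar b g f₁ f₂ (2 * n - (2 * l + 2)) (2 * l + 2) =
          coeff n (X * gh * f₁h * (f₁h * f₂h) ^ l)) := by
  
  intro n
  have Rg : PsRel 0 g gh := by
    refine ⟨by omega, by omega, ?_, ?_⟩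
    · intro j; simpa using (hgh j).symm
    · intro j; simpa using hge j
  have Rf1 : PsRel 1 f₁ f₁h := by
    refine ⟨?_, ?_, ?_, ?_⟩
    · intro m hm; interval_cases m; simpa using hf₁o 0
    · intro m hm; interval_cases m; simpa using hf₁h0
    · intro j
      have := (hf₁h j).symm
      have e1 : 1 + 2*j = 2*j + 1 := by omega
      have e2 : 1 + j = j + 1 := by omega
      rw [e1, e2]; exact this
    · intro j
      have := hf₁o (j+1)
      have e1 : 1 + 2*j + 1 = 2*(j+1) := by omega
      rw [e1]; exact this
  have Rf2 : PsRel 1 f₂ f₂h := by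
    refine ⟨?_, ?_, ?_, ?_⟩
    · intro m hm; interval_cases m; simpa using hf₂o 0
    · intro m hm; interval_cases m; simpa using hf₂h0
    · intro j
      have := (hf₂h j).symm
      have e1 : 1 + 2*j = 2*j + 1 := by omega
      have e2 : 1 + j = j + 1 := by omega
      rw [e1, e2]; exact this
    · intro j
      have := hf₂o (j+1)
      have e1 : 1 + 2*j + 1 = 2*(j+1) := by omega
      rw [e1]; exact this
  refine ⟨?_, ?_, ?_⟩
  · simp only [dar, if_pos rfl]
    exact (hbh n).symm
  · intro l hl
    have R : PsRel (2*l+1) (X * g * (f₁ * f₂) ^ l) (X * gh * (f₁h * f₂h) ^ l) :=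
      ((PsRel.X.mul Rg).mul ((Rf1.mul Rf2).pow l)).cast (by ring)
    have e := R.ev (n - (2*l+1))
    have i1 : (2*l+1) + 2*(n-(2*l+1)) = 2*n - (2*l+1) := by omega
    have i2 : (2*l+1) + (n-(2*l+1)) = n := by omega
    rw [i1, i2] at e
    have hk0 : ¬ (2*l+1 = 0) := by omega
    have hk1 : (2*l+1) % 2 = 1 := by omega
    have hk2 : (2*l+1-1)/2 = l := by omega
    simp only [dar, if_neg hk0, if_pos hk1, hk2]
    exact e
  · intro l hl
    have R : PsRel (2*l+2) (X * g * f₁ * (f₁ * f₂) ^ l) (X * gh * f₁h * (f₁h * f₂h) ^ l) :=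
      (((PsRel.X.mul Rg).mul Rf1).mul ((Rf1.mul Rf2).pow l)).cast (by ring)
    have e := R.ev (n - (2*l+2))
    have i1 : (2*l+2) + 2*(n-(2*l+2)) = 2*n - (2*l+2) := by omega
    have i2 : (2*l+2) + (n-(2*l+2)) = n := by omega
    rw [i1, i2] at e
    have hk0 : ¬ (2*l+2 = 0) := by omega
    have hk1 : ¬ ((2*l+2) % 2 = 1) := by omega
    have hk2 : (2*l+2-2)/2 = l := by omega
    simp only [dar, if_neg hk0, if_neg hk1, hk2]
    exact e
end

section
/- W-sequence recurrence for the compression of a double almost-Riordan array: Suppose W̃ ∈ K[[t]] satisfies b₀·f₂·(b − b₀) = b₂·t²·b·f₂ + t³·g·(b₀·(W̃∘(f₁f₂)) − b₂), where b₂ = [t²]b, and set w_j := [t^j]W̃ (so w₀ = b₂/b₀). Let d̂_{n,k} := d_{2n−k,k} for 0 ≤ k ≤ n and d̂_{n,k} := 0 for k > n. Then for all n ≥ 1, d̂_{n,0} = w₀·d̂_{n−1,0} + w₁·d̂_{n,2} + w₂·d̂_{n+1,4} + ⋯ = Σ_{j≥0} w_j·d̂_{n+j−1, 2j}, where the sum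 has only finitely many nonzero terms. -/
open PowerSeries

variable {K : Type*} [Field K]

/-- The compression of the double almost-Riordan array: `d̂_{n,k} = d_{2n−k,k}` for `k ≤ n`,
and `0` otherwise. -/
noncomputable def darHat (b g f₁ f₂ : PowerSeries K) (n k : ℕ) : K :=
  if k ≤ n then dar b g f₁ f₂ (2 * n - k) k else 0

/-- W-sequence recurrence for the compression of a double almost-Riordan array. -/
theorem darHat_W_seq
    (b g f₁ f₂ : PowerSeries K)
    (hbe : ∀ k, coeff (2 * k + 1) b = 0)
    (hge : ∀ k, coeff (2 * k + 1) g = 0)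
    (hb0 : constantCoeff b ≠ 0)
    (hg0 : constantCoeff g ≠ 0)
    (hf₁o : ∀ k, coeff (2 * k) f₁ = 0)
    (hf₂o : ∀ k, coeff (2 * k) f₂ = 0)
    (hf₁1 : coeff 1 f₁ ≠ 0)
    (hf₂1 : coeff 1 f₂ ≠ 0)
    (W : PowerSeries K)
    (hW : C (constantCoeff b) * f₂ * (b - C (constantCoeff b)) =
        C (coeff 2 b) * X ^ 2 * b * f₂ +
          X ^ 3 * g * (C (constantCoeff b) * psComp W (f₁ * f₂) - C (coeff 2 b))) :
    ∀ n : ℕ, 1 ≤ n →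
      darHat b g f₁ f₂ n 0 =
        ∑ᶠ j : ℕ, coeff j W * darHat b g f₁ f₂ (n + j - 1) (2 * j) := by
  intro n hn
  obtain ⟨m, rfl⟩ : ∃ m, n = m + 1 := ⟨n - 1, (Nat.succ_pred_eq_of_pos hn).symm⟩
  clear hn
  set b₀ := constantCoeff b with hb₀def
  set b₂ := coeff 2 b with hb₂def
  set h : PowerSeries K := f₁ * f₂ with hhdef
  set w : ℕ → K := fun j => coeff j W with hwdef
  -- basic divisibility facts
  obtain ⟨u₁, hu₁⟩ : (X : K⟦X⟧) ∣ f₁ := X_dvd_iff.mpr (by simpa using hf₁o 0)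
  obtain ⟨u₂, hu₂⟩ : (X : K⟦X⟧) ∣ f₂ := X_dvd_iff.mpr (by simpa using hf₂o 0)
  have hhpow : ∀ j : ℕ, ∃ v : K⟦X⟧, h ^ j = X ^ (2 * j) * v := by
    intro j
    refine ⟨(u₁ * u₂) ^ j, ?_⟩
    rw [hhdef, hu₁, hu₂]
    rw [show (X : K⟦X⟧) * u₁ * (X * u₂) = X ^ 2 * (u₁ * u₂) by ring, mul_pow, ← pow_mul]
  have hhcoeff : ∀ j k : ℕ, k < 2 * j → coeff k (h ^ j) = 0 := by
    intro j k hk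
    obtain ⟨v, hv⟩ := hhpow j
    rw [hv, coeff_X_pow_mul', if_neg (by omega)]
  -- N
  set N : ℕ := 2 * m + 3 with hNdef
  set S : PowerSeries K := ∑ j ∈ Finset.range N, C (w (j + 1)) * (f₁ * h ^ j) with hSdef
  -- decomposition of psComp
  have hf₂S : f₂ * S = ∑ j ∈ Finset.range N, C (w (j + 1)) * h ^ (j + 1) := by
    rw [hSdef, Finset.mul_sum]
    refine Finset.sum_congr rfl fun j _ => ?_
    rw [pow_succ', hhdef]; ring
  have hdecomp : (X : K⟦X⟧) ^ N ∣ psComp W h - (C (w 0) + f₂ * S) := by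
    rw [X_pow_dvd_iff]
    intro k hk
    rw [map_sub, sub_eq_zero, hf₂S]
    have heq : (∑ j ∈ Finset.range (N + 1), C (w j) * h ^ j) =
        (∑ j ∈ Finset.range N, C (w (j + 1)) * h ^ (j + 1)) + C (w 0) * h ^ 0 :=
      Finset.sum_range_succ' _ N
    rw [pow_zero, mul_one] at heq
    rw [add_comm (C (w 0)), ← heq, map_sum]
    have hps : coeff k (psComp W h) = ∑ j ∈ Finset.range (k + 1), w j * coeff k (h ^ j) := by
      simp [psComp, hwdef]
    rw [hps]
    simp_rw [coeff_C_mul]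
    have hsub : Finset.range (k + 1) ⊆ Finset.range (N + 1) := by
      apply Finset.range_subset_range.mpr; omega
    refine Finset.sum_subset hsub fun j hj hj' => ?_
    simp only [Finset.mem_range, not_lt] at hj'
    rw [hhcoeff j k (by omega), mul_zero]
  obtain ⟨R, hR⟩ := hdecomp
  -- b₀ * w 0 = b₂ from coeff 3 of hW
  have hw0 : b₀ * w 0 = b₂ := by
    have h3 := congrArg (coeff 3) hW
    have e1 : coeff 3 (C b₀ * f₂ * (b - C b₀)) = b₀ * (coeff 1 f₂ * b₂) := by
      rw [mul_assoc, coeff_C_mul, coeff_mul,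
        Finset.Nat.sum_antidiagonal_eq_sum_range_succ_mk]
      have h0 : coeff 0 f₂ = 0 := by simpa using hf₂o 0
      have h2 : coeff 2 f₂ = 0 := by simpa using hf₂o 1
      simp [Finset.sum_range_succ, h0, h2, coeff_C, hb₂def, hb₀def]
    have e2 : coeff 3 (C b₂ * X ^ 2 * b * f₂) = b₂ * (coeff 1 f₂ * b₀) := by
      rw [show C b₂ * X ^ 2 * b * f₂ = C b₂ * (X ^ 2 * (b * f₂)) by ring,
        coeff_C_mul, coeff_X_pow_mul', if_pos (by norm_num)]
      have h0 : coeff 0 f₂ = 0 := by simpa using hf₂o 0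
      rw [show (3 : ℕ) - 2 = 1 by norm_num, coeff_mul,
        Finset.Nat.sum_antidiagonal_eq_sum_range_succ_mk]
      simp [Finset.sum_range_succ, h0, hb₀def, mul_comm]
    have e3 : coeff 3 (X ^ 3 * g * (C b₀ * psComp W h - C b₂)) =
        constantCoeff g * (b₀ * w 0 - b₂) := by
      rw [mul_assoc, coeff_X_pow_mul', if_pos le_rfl]
      rw [show (3 : ℕ) - 3 = 0 by norm_num]
      rw [coeff_zero_eq_constantCoeff, map_mul]
      congr 1
      rw [map_sub, map_mul, constantCoeff_C, constantCoeff_C]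
      congr 2
      rw [← coeff_zero_eq_constantCoeff_apply]
      simp [psComp, hwdef]
    rw [map_add] at h3
    rw [e1, e2, e3] at h3
    have h4 : constantCoeff g * (b₀ * w 0 - b₂) = 0 := by linear_combination -h3
    have h5 := (mul_eq_zero.mp h4).resolve_left hg0
    linear_combination h5
  -- the key series E
  set E : PowerSeries K :=
    C b₀ * (b - C b₀) - C b₂ * X ^ 2 * b - X ^ 3 * g * (C b₀ * S) with hEdef
  have hCb₂ : C b₂ = C b₀ * C (w 0) := by rw [← map_mul, hw0]
  have hf₂E : f₂ * E = X ^ (N + 3) * (g * (C b₀ * R)) := by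
    rw [hEdef, pow_add]
    linear_combination hW + (X ^ 3 * g * C b₀) * hR - (X ^ 3 * g) * hCb₂
  -- cancel f₂ = X * u₂
  have hu₂0 : constantCoeff u₂ ≠ 0 := by
    intro hc
    apply hf₂1
    rw [hu₂, coeff_mul, Finset.Nat.sum_antidiagonal_eq_sum_range_succ_mk]
    simp [Finset.sum_range_succ, coeff_zero_eq_constantCoeff, hc]
  have hXE : (X : K⟦X⟧) ^ (N + 2) ∣ E := by
    have hcancel : u₂ * E = X ^ (N + 2) * (g * (C b₀ * R)) := by
      have : (X : K⟦X⟧) * (u₂ * E) = X * (X ^ (N + 2) * (g * (C b₀ * R))) := by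
        rw [← mul_assoc, ← hu₂]
        rw [show (X : K⟦X⟧) * (X ^ (N + 2) * (g * (C b₀ * R))) =
          X ^ (N + 3) * (g * (C b₀ * R)) by ring]
        exact hf₂E
      exact mul_left_cancel₀ X_ne_zero this
    have hu : IsUnit u₂ := isUnit_iff_constantCoeff.mpr (isUnit_iff_ne_zero.mpr hu₂0)
    obtain ⟨U, hU⟩ := hu
    have : E = ↑U⁻¹ * (u₂ * E) := by rw [← mul_assoc, ← hU, Units.inv_mul, one_mul]
    rw [this, hcancel]
    exact ⟨↑U⁻¹ * (g * (C b₀ * R)), by ring⟩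
  have hE2n : coeff (2 * m + 2) E = 0 := by
    rw [X_pow_dvd_iff] at hXE
    exact hXE _ (by omega)
  -- expand hE2n
  have hkey : b₀ * coeff (2 * m + 2) b =
      b₂ * coeff (2 * m) b +
        b₀ * ∑ j ∈ Finset.range m, w (j + 1) * coeff (2 * m) (X * g * f₁ * h ^ j) := by
    have e1 : coeff (2 * m + 2) (C b₀ * (b - C b₀)) = b₀ * coeff (2 * m + 2) b := by
      rw [coeff_C_mul, map_sub, coeff_C, if_neg (by omega), sub_zero]
    have e2 : coeff (2 * m + 2) (C b₂ * X ^ 2 * b) = b₂ * coeff (2 * m) b := by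
      rw [show C b₂ * X ^ 2 * b = C b₂ * (X ^ 2 * b) by ring, coeff_C_mul,
        show 2 * m + 2 = 2 * m + 2 from rfl]
      congr 1
      have := coeff_X_pow_mul b 2 (2 * m)
      simpa using this
    have e3 : coeff (2 * m + 2) (X ^ 3 * g * (C b₀ * S)) =
        b₀ * ∑ j ∈ Finset.range m, w (j + 1) * coeff (2 * m) (X * g * f₁ * h ^ j) := by
      have expand : X ^ 3 * g * (C b₀ * S) =
          C b₀ * ∑ j ∈ Finset.range N, C (w (j + 1)) * (X ^ 3 * g * (f₁ * h ^ j)) := by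
        rw [hSdef]
        simp only [Finset.mul_sum]
        exact Finset.sum_congr rfl fun j _ => by ring
      rw [expand, coeff_C_mul, map_sum]
      congr 1
      have hsub : Finset.range m ⊆ Finset.range N := by
        apply Finset.range_subset_range.mpr; omega
      rw [← Finset.sum_subset hsub]
      · refine Finset.sum_congr rfl fun j _ => ?_
        rw [coeff_C_mul]
        congr 1
        rw [show X ^ 3 * g * (f₁ * h ^ j) = X ^ 2 * (X * g * f₁ * h ^ j) by ring]
        have := coeff_X_pow_mul (X * g * f₁ * h ^ j) 2 (2 * m)
        simpa using this
      · intro j hj hj'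
        simp only [Finset.mem_range, not_lt] at hj'
        rw [coeff_C_mul]
        obtain ⟨v, hv⟩ := hhpow j
        rw [show X ^ 3 * g * (f₁ * h ^ j) = X ^ 3 * g * (f₁ * h ^ j) from rfl, hv, hu₁,
          show X ^ 3 * g * (X * u₁ * (X ^ (2 * j) * v)) =
            X ^ (2 * j + 4) * (g * u₁ * v) by ring,
          coeff_X_pow_mul', if_neg (by omega), mul_zero]
    rw [hEdef, map_sub, map_sub, e1, e2, e3, sub_sub, sub_eq_zero] at hE2n
    exact hE2n
  -- now the goal
  have hgoal0 : darHat b g f₁ f₂ (m + 1) 0 = coeff (2 * (m + 1)) b := by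
    simp [darHat, dar]
  rw [hgoal0]
  have hsupp : (Function.support fun j => w j * darHat b g f₁ f₂ (m + 1 + j - 1) (2 * j)) ⊆
      ↑(Finset.range (m + 1)) := by
    intro j hj
    simp only [Function.mem_support, ne_eq] at hj
    simp only [Finset.coe_range, Set.mem_Iio]
    by_contra hc
    push_neg at hc
    apply hj
    rw [darHat, if_neg (by omega), mul_zero]
  rw [show (∑ᶠ j : ℕ, coeff j W * darHat b g f₁ f₂ (m + 1 + j - 1) (2 * j)) =
      ∑ j ∈ Finset.range (m + 1), w j * darHat b g f₁ f₂ (m + 1 + j - 1) (2 * j) from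
    finsum_eq_sum_of_support_subset _ hsupp]
  rw [Finset.sum_range_succ']
  have hterm0 : w 0 * darHat b g f₁ f₂ (m + 1 + 0 - 1) (2 * 0) = w 0 * coeff (2 * m) b := by
    simp [darHat, dar]
  rw [hterm0]
  have hterms : ∀ j ∈ Finset.range m,
      w (j + 1) * darHat b g f₁ f₂ (m + 1 + (j + 1) - 1) (2 * (j + 1)) =
        w (j + 1) * coeff (2 * m) (X * g * f₁ * h ^ j) := by
    intro j hj
    simp only [Finset.mem_range] at hj
    congr 1
    rw [darHat, if_pos (by omega), dar, if_neg (by omega), if_neg (by omega),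
      show 2 * (m + 1 + (j + 1) - 1) - 2 * (j + 1) = 2 * m by omega,
      show (2 * (j + 1) - 2) / 2 = j by omega]
  rw [Finset.sum_congr rfl hterms]
  apply mul_left_cancel₀ hb0
  rw [show (2 : ℕ) * (m + 1) = 2 * m + 2 by ring, hkey, ← hw0]
  ring
end

section
/- Total positivity of compressed double Riordan arrays from Pólya frequency data: Let ĝ, f̂₁, f̂₂ ∈ ℝ[[t]] with f̂₁(0) = f̂₂(0) = 0. Assume the three Toeplitz matrices ([t^{i−j}]ĝ)_{i,j≥0}, ([t^{i−j+1}]f̂₁)_{i,j≥0} and ([t^{i−j+1}]f̂₂)_{i,j≥0} (entries with negative exponent being 0) are totally positive, i.e., ĝ, f̂₁ and f̂₂ are Pólya frequency formal power series. Then the compressed double Riordan array (ĝ;f̂₁,f̂₂) is totally positive. -/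
open PowerSeries

/-- An infinite real matrix is totally positive if every minor (determinant of a square
submatrix with strictly increasing row and column indices) is nonnegative. -/
def TotallyPositive (M : ℕ → ℕ → ℝ) : Prop :=
  ∀ (r : ℕ) (rows cols : Fin r → ℕ), StrictMono rows → StrictMono cols →
    0 ≤ (Matrix.of fun i j => M (rows i) (cols j)).det

/-- The compressed double Riordan array `(ĝ; f̂₁, f̂₂)`:
column `2ℓ` is `ĝ·(f̂₁f̂₂)^ℓ`, column `2ℓ+1` is `ĝ·f̂₁·(f̂₁f̂₂)^ℓ`. -/
noncomputable def cDR (g f₁ f₂ : PowerSeries ℝ) (n k : ℕ) : ℝ :=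
  if k % 2 = 0 then coeff n (g * (f₁ * f₂) ^ (k / 2))
  else coeff n (g * f₁ * (f₁ * f₂) ^ (k / 2))

/-- The compressed double almost-Riordan array `(b̂ | ĝ; f̂₁, f̂₂)`: column 0 is `b̂`,
column `2ℓ+1` is `t·ĝ·(f̂₁f̂₂)^ℓ`, column `2ℓ+2` is `t·ĝ·f̂₁·(f̂₁f̂₂)^ℓ`. -/
noncomputable def cDAR (b g f₁ f₂ : PowerSeries ℝ) (n k : ℕ) : ℝ :=
  if k = 0 then coeff n b
  else if k % 2 = 1 then coeff n (X * g * (f₁ * f₂) ^ ((k - 1) / 2))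
  else coeff n (X * g * f₁ * (f₁ * f₂) ^ ((k - 2) / 2))

namespace CDRTPAux

open Finset Matrix

variable {r m : ℕ}

lemma strictMono_val {s : Fin r → Fin m} (hs : StrictMono s) :
    StrictMono fun i => (s i : ℕ) := fun a b h => by
  exact_mod_cast hs h

noncomputable instance : Fintype {s : Fin r → Fin m // StrictMono s} :=
  Fintype.ofFinite _

private lemma card_image (f : Fin r → Fin m) (hf : Function.Injective f) :
    (Finset.univ.image f).card = r := by
  rw [Finset.card_image_of_injective _ hf, Finset.card_univ, Fintype.card_fin]

/-- The increasing enumeration of the range of an injective map `Fin r → Fin m`. -/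
noncomputable def monoOf (f : Fin r → Fin m) (hf : Function.Injective f) : Fin r → Fin m :=
  fun i => (Finset.univ.image f).orderEmbOfFin (card_image f hf) i

lemma monoOf_strictMono (f : Fin r → Fin m) (hf : Function.Injective f) :
    StrictMono (monoOf f hf) :=
  ((Finset.univ.image f).orderEmbOfFin (card_image f hf)).strictMono

/-- The permutation such that `f = monoOf f ∘ permOf f`. -/
noncomputable def permOf (f : Fin r → Fin m) (hf : Function.Injective f) :
    Equiv.Perm (Fin r) :=
  Equiv.ofBijective
    (fun i => ((Finset.univ.image f).orderIsoOfFin (card_image f hf)).symm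
      ⟨f i, Finset.mem_image_of_mem f (Finset.mem_univ i)⟩)
    (by
      have hinj : Function.Injective
          (fun i => ((Finset.univ.image f).orderIsoOfFin (card_image f hf)).symm
            ⟨f i, Finset.mem_image_of_mem f (Finset.mem_univ i)⟩) := by
        intro a b hab
        have h2 := congrArg ((Finset.univ.image f).orderIsoOfFin (card_image f hf)) hab
        simp only [OrderIso.apply_symm_apply] at h2
        exact hf (congrArg Subtype.val h2)
      exact Finite.injective_iff_bijective.mp hinj)

lemma monoOf_permOf (f : Fin r → Fin m) (hf : Function.Injective f) (i : Fin r) :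
    monoOf f hf (permOf f hf i) = f i := by
  unfold monoOf permOf
  rw [Equiv.ofBijective_apply, ← Finset.coe_orderIsoOfFin_apply, OrderIso.apply_symm_apply]

lemma monoOf_comp (s : Fin r → Fin m) (hs : StrictMono s) (σ : Equiv.Perm (Fin r))
    (h : Function.Injective (s ∘ σ)) :
    monoOf (s ∘ σ) h = s := by
  have himg : Finset.univ.image (s ∘ ⇑σ) = Finset.univ.image s := by
    ext x
    simp only [Finset.mem_image, Finset.mem_univ, true_and, Function.comp_apply]
    constructor
    · rintro ⟨i, rfl⟩; exact ⟨σ i, rfl⟩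
    · rintro ⟨i, rfl⟩; exact ⟨σ.symm i, by simp⟩
  have huniq := Finset.orderEmbOfFin_unique (s := Finset.univ.image (s ∘ ⇑σ))
    (card_image _ h) (f := s)
    (fun x => by rw [himg]; exact Finset.mem_image_of_mem s (Finset.mem_univ x)) hs
  funext i
  exact (congrFun huniq i).symm

lemma permOf_comp (s : Fin r → Fin m) (hs : StrictMono s) (σ : Equiv.Perm (Fin r))
    (h : Function.Injective (s ∘ σ)) :
    permOf (s ∘ σ) h = σ := by
  apply Equiv.ext
  intro i
  have h1 : monoOf (s ∘ ⇑σ) h (permOf (s ∘ ⇑σ) h i) = s (σ i) := monoOf_permOf _ h i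
  rw [monoOf_comp s hs σ h] at h1
  exact hs.injective h1

lemma det_mul_expand (A : Matrix (Fin r) (Fin m) ℝ) (B : Matrix (Fin m) (Fin r) ℝ) :
    (A * B).det = ∑ f : Fin r → Fin m, (∏ i, A i (f i)) * (B.submatrix f id).det := by
  have h1 : (A * B).det
      = Matrix.detRowAlternating (R := ℝ) (n := Fin r)
        (fun i => ∑ j : Fin m, A i j • B j) := by
    have h2 : ((A * B : Matrix (Fin r) (Fin r) ℝ) : Fin r → Fin r → ℝ)
        = fun i => ∑ j : Fin m, A i j • B j := by
      funext i k
      simp [Matrix.mul_apply, Finset.sum_apply]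
    show Matrix.detRowAlternating (A * B : Matrix (Fin r) (Fin r) ℝ) = _
    exact congrArg _ h2
  rw [h1]
  have h5 := (Matrix.detRowAlternating (R := ℝ) (n := Fin r)).toMultilinearMap.map_sum
    (g := fun i j => A i j • B j)
  simp only [AlternatingMap.coe_multilinearMap] at h5
  rw [h5]
  refine Finset.sum_congr rfl fun f _ => ?_
  have h3 := (Matrix.detRowAlternating (R := ℝ) (n := Fin r)).toMultilinearMap.map_smul_univ
    (fun i => A i (f i)) (fun i => B (f i))
  simp only [AlternatingMap.coe_multilinearMap] at h3 ⊢
  rw [h3, smul_eq_mul]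
  rfl

/-- Nonnegativity of the determinant of a product of rectangular matrices all of whose
minors are nonnegative (a consequence of the Cauchy–Binet formula). -/
lemma det_mul_nonneg (A : Matrix (Fin r) (Fin m) ℝ) (B : Matrix (Fin m) (Fin r) ℝ)
    (hA : ∀ s : Fin r → Fin m, StrictMono s → 0 ≤ (A.submatrix id s).det)
    (hB : ∀ s : Fin r → Fin m, StrictMono s → 0 ≤ (B.submatrix s id).det) :
    0 ≤ (A * B).det := by
  classical
  rw [det_mul_expand]
  have hterm : ∀ f : Fin r → Fin m, ¬Function.Injective f →
      (∏ i, A i (f i)) * (B.submatrix f id).det = 0 := by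
    intro f hf
    rw [Function.not_injective_iff] at hf
    obtain ⟨a, b, hab, hne⟩ := hf
    have hz : (B.submatrix f id).det = 0 :=
      Matrix.det_zero_of_row_eq hne (by
        funext j
        simp [Matrix.submatrix_apply, hab])
    rw [hz, mul_zero]
  rw [← Finset.sum_filter_of_ne (s := Finset.univ)
    (p := fun f : Fin r → Fin m => Function.Injective f)
    (fun f _ h => by by_contra hc; exact h (hterm f hc))]
  have hgroup :
      (∑ f ∈ Finset.univ.filter (fun f : Fin r → Fin m => Function.Injective f),
        (∏ i, A i (f i)) * (B.submatrix f id).det)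
      = ∑ p : {s : Fin r → Fin m // StrictMono s} × Equiv.Perm (Fin r),
          (∏ i, A i (p.1.1 (p.2 i))) * (B.submatrix (p.1.1 ∘ ⇑p.2) id).det := by
    refine Finset.sum_bij
      (fun f hf => (⟨monoOf f (Finset.mem_filter.mp hf).2,
          monoOf_strictMono f (Finset.mem_filter.mp hf).2⟩,
          permOf f (Finset.mem_filter.mp hf).2)) ?_ ?_ ?_ ?_
    · intro f hf; exact Finset.mem_univ _
    · intro f₁ h₁ f₂ h₂ heq
      obtain ⟨hm, hp⟩ := Prod.mk.injEq _ _ _ _ ▸ heq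
      have hm' : monoOf f₁ (Finset.mem_filter.mp h₁).2
          = monoOf f₂ (Finset.mem_filter.mp h₂).2 := congrArg Subtype.val hm
      funext i
      rw [← monoOf_permOf f₁ (Finset.mem_filter.mp h₁).2 i,
        ← monoOf_permOf f₂ (Finset.mem_filter.mp h₂).2 i, hm', hp]
    · intro p _
      have hinj : Function.Injective (p.1.1 ∘ ⇑p.2) :=
        p.1.2.injective.comp p.2.injective
      refine ⟨p.1.1 ∘ ⇑p.2, Finset.mem_filter.mpr ⟨Finset.mem_univ _, hinj⟩, ?_⟩
      have h1 := monoOf_comp p.1.1 p.1.2 p.2 hinj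
      have h2 := permOf_comp p.1.1 p.1.2 p.2 hinj
      have : (⟨monoOf (p.1.1 ∘ ⇑p.2) hinj, monoOf_strictMono _ hinj⟩
          : {s : Fin r → Fin m // StrictMono s}) = p.1 := Subtype.ext h1
      rw [Prod.ext_iff]
      exact ⟨this, h2⟩
    · intro f hf
      have hkey : monoOf f (Finset.mem_filter.mp hf).2 ∘ ⇑(permOf f (Finset.mem_filter.mp hf).2)
          = f := funext (monoOf_permOf f (Finset.mem_filter.mp hf).2)
      simp only [hkey, monoOf_permOf]
  rw [hgroup, Fintype.sum_prod_type]
  refine Finset.sum_nonneg fun s _ => ?_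
  have h1 : ∀ σ : Equiv.Perm (Fin r),
      (B.submatrix (s.1 ∘ ⇑σ) id).det
        = ((Equiv.Perm.sign σ : ℤ) : ℝ) * (B.submatrix s.1 id).det := by
    intro σ
    have h2 : B.submatrix (s.1 ∘ ⇑σ) id = (B.submatrix s.1 id).submatrix ⇑σ id := rfl
    rw [h2, Matrix.det_permute]
  have h3 : (∑ σ : Equiv.Perm (Fin r),
        (∏ i, A i (s.1 (σ i))) * (B.submatrix (s.1 ∘ ⇑σ) id).det)
      = (A.submatrix id s.1).det * (B.submatrix s.1 id).det := by
    have h4 : (A.submatrix id s.1).det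
        = ∑ σ : Equiv.Perm (Fin r), ((Equiv.Perm.sign σ : ℤ) : ℝ) * ∏ i, A i (s.1 (σ i)) := by
      rw [← Matrix.det_transpose, Matrix.det_apply']
      refine Finset.sum_congr rfl fun σ _ => ?_
      congr 1
    rw [h4, Finset.sum_mul]
    refine Finset.sum_congr rfl fun σ _ => ?_
    rw [h1 σ]
    ring
  rw [h3]
  exact mul_nonneg (hA s.1 s.2) (hB s.1 s.2)

/-- Minor-nonnegativity transfers through a (finite) matrix product decomposition. -/
lemma minor_nonneg_of_prod (M P Q : ℕ → ℕ → ℝ) (mB : ℕ) (rows cols : Fin r → ℕ)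
    (hM : ∀ i k, M (rows i) (cols k) = ∑ j ∈ Finset.range mB, P (rows i) j * Q j (cols k))
    (hP : ∀ s : Fin r → Fin mB, StrictMono s →
      0 ≤ (Matrix.of fun i j => P (rows i) ((s j : ℕ))).det)
    (hQ : ∀ s : Fin r → Fin mB, StrictMono s →
      0 ≤ (Matrix.of fun i j => Q ((s i : ℕ)) (cols j)).det) :
    0 ≤ (Matrix.of fun i j => M (rows i) (cols j)).det := by
  have hEq : (Matrix.of fun i j => M (rows i) (cols j)) =
      (Matrix.of fun (i : Fin r) (j : Fin mB) => P (rows i) (j : ℕ)) *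
      (Matrix.of fun (j : Fin mB) (k : Fin r) => Q (j : ℕ) (cols k)) := by
    ext i k
    rw [Matrix.mul_apply, Matrix.of_apply, hM i k,
      ← Fin.sum_univ_eq_sum_range (fun j => P (rows i) j * Q j (cols k)) mB]
    rfl
  rw [hEq]
  exact det_mul_nonneg _ _ (fun s hs => hP s hs) (fun s hs => hQ s hs)

/-- The Toeplitz matrix of a power series. -/
noncomputable def toep (f : PowerSeries ℝ) (n j : ℕ) : ℝ :=
  if j ≤ n then coeff (n - j) f else 0

lemma toep_TP (f : PowerSeries ℝ) (h0 : constantCoeff f = 0)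
    (hT : TotallyPositive fun i j => if j ≤ i + 1 then coeff (i + 1 - j) f else 0) :
    TotallyPositive (toep f) := by
  intro r rows cols hr hc
  rcases r with _ | r
  · rw [Matrix.det_isEmpty]; exact zero_le_one
  by_cases h : rows 0 = 0
  · apply le_of_eq
    symm
    apply Matrix.det_eq_zero_of_row_eq_zero 0
    intro j
    simp only [Matrix.of_apply, toep, h]
    split
    · next hle =>
      have hc0 : cols j = 0 := Nat.le_zero.mp hle
      rw [hc0]
      simpa using h0
    · rfl
  · have hpos : ∀ i, 1 ≤ rows i := fun i => by
      have := hr.monotone (Fin.zero_le i)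
      omega
    have hr' : StrictMono fun i => rows i - 1 := fun a b hab => by
      have h1 := hr hab
      have h2 := hpos a
      show rows a - 1 < rows b - 1
      omega
    have hres := hT _ (fun i => rows i - 1) cols hr' hc
    have hEq : (Matrix.of fun i j => toep f (rows i) (cols j)) =
        (Matrix.of fun i j =>
          if cols j ≤ (rows i - 1) + 1 then coeff ((rows i - 1) + 1 - cols j) f else 0) := by
      ext i j
      have h1 : rows i - 1 + 1 = rows i := Nat.succ_pred_eq_of_pos (hpos i)
      simp [toep, h1]
    rw [hEq]
    exact hres

/-- The generating series of column `k` of `cDR 1 f₁ f₂`. -/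
noncomputable def ucol (f₁ f₂ : PowerSeries ℝ) (k : ℕ) : PowerSeries ℝ :=
  if k % 2 = 0 then (f₁ * f₂) ^ (k / 2) else f₁ * (f₁ * f₂) ^ (k / 2)

lemma cDR_eq (g f₁ f₂ : PowerSeries ℝ) (n k : ℕ) :
    cDR g f₁ f₂ n k = coeff n (g * ucol f₁ f₂ k) := by
  unfold cDR ucol
  split
  · rfl
  · rw [mul_assoc]

lemma ucol_succ (f₁ f₂ : PowerSeries ℝ) (k : ℕ) :
    ucol f₁ f₂ (k + 1) = f₁ * ucol f₂ f₁ k := by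
  unfold ucol
  rcases Nat.even_or_odd k with he | ho
  · have h1 : k % 2 = 0 := Nat.even_iff.mp he
    have h2 : (k + 1) % 2 = 1 := by omega
    have h3 : (k + 1) / 2 = k / 2 := by omega
    rw [h2, h3, h1]
    rw [if_neg (by norm_num), if_pos rfl]
    rw [mul_comm f₂ f₁]
  · have h1 : k % 2 = 1 := Nat.odd_iff.mp ho
    have h2 : (k + 1) % 2 = 0 := by omega
    have h3 : (k + 1) / 2 = k / 2 + 1 := by omega
    rw [h2, h3, h1]
    rw [if_pos rfl, if_neg (by norm_num)]
    rw [mul_comm f₂ f₁, pow_succ]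
    ring

lemma coeff_mul_eq_sum (f u : PowerSeries ℝ) (n B : ℕ) (hB : n < B) :
    coeff n (f * u) = ∑ j ∈ Finset.range B, toep f n j * coeff j u := by
  have L1 : coeff n (f * u) = ∑ k ∈ Finset.range (n + 1), coeff k f * coeff (n - k) u := by
    rw [PowerSeries.coeff_mul]
    exact Finset.Nat.sum_antidiagonal_eq_sum_range_succ (fun a b => coeff a f * coeff b u) n
  have L2 : ∑ k ∈ Finset.range (n + 1), coeff k f * coeff (n - k) u
      = ∑ j ∈ Finset.range (n + 1), toep f n j * coeff j u := by
    rw [← Finset.sum_range_reflect (fun j => toep f n j * coeff j u) (n + 1)]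
    refine Finset.sum_congr rfl fun j hj => ?_
    simp only [Finset.mem_range] at hj
    have hj' : j ≤ n := by omega
    have h1 : n + 1 - 1 - j = n - j := by omega
    rw [h1]
    have h2 : n - j ≤ n := Nat.sub_le n j
    simp [toep, h2, Nat.sub_sub_self hj']
  have L3 : ∑ j ∈ Finset.range (n + 1), toep f n j * coeff j u
      = ∑ j ∈ Finset.range B, toep f n j * coeff j u := by
    apply Finset.sum_subset
    · intro x hx
      simp only [Finset.mem_range] at hx ⊢
      omega
    · intro x hx hnx
      simp only [Finset.mem_range] at hx hnx
      have hxn : ¬ x ≤ n := by omega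
      simp [toep, hxn]
  rw [L1, L2, L3]

lemma cDR_col_sum (g f₁ f₂ : PowerSeries ℝ) (n k B : ℕ) (hB : n < B) :
    cDR g f₁ f₂ n k = ∑ j ∈ Finset.range B, toep g n j * cDR 1 f₁ f₂ j k := by
  rw [cDR_eq, coeff_mul_eq_sum g _ n B hB]
  refine Finset.sum_congr rfl fun j _ => ?_
  rw [cDR_eq, one_mul]

lemma cDR1_shift_sum (f₁ f₂ : PowerSeries ℝ) (n k B : ℕ) (hB : n < B) (hk : 1 ≤ k) :
    cDR 1 f₁ f₂ n k = ∑ j ∈ Finset.range B, toep f₁ n j * cDR 1 f₂ f₁ j (k - 1) := by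
  obtain ⟨k', rfl⟩ : ∃ k', k = k' + 1 := ⟨k - 1, by omega⟩
  rw [cDR_eq, one_mul, ucol_succ, coeff_mul_eq_sum f₁ _ n B hB]
  simp only [Nat.add_sub_cancel]
  refine Finset.sum_congr rfl fun j _ => ?_
  rw [cDR_eq, one_mul]

lemma cDR1_col_zero (f₁ f₂ : PowerSeries ℝ) (n : ℕ) :
    cDR 1 f₁ f₂ n 0 = if n = 0 then 1 else 0 := by
  unfold cDR
  simp [PowerSeries.coeff_one]

/-- The key induction: total positivity of minors of `cDR 1 f₁ f₂`, by strong induction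
on (size of minor) + (sum of column indices). -/
lemma inner_TP (m : ℕ) : ∀ (f₁ f₂ : PowerSeries ℝ),
    constantCoeff f₁ = 0 → constantCoeff f₂ = 0 →
    TotallyPositive (toep f₁) → TotallyPositive (toep f₂) →
    ∀ (r : ℕ) (rows cols : Fin r → ℕ), StrictMono rows → StrictMono cols →
      r + ∑ i, cols i ≤ m →
      0 ≤ (Matrix.of fun i j => cDR 1 f₁ f₂ (rows i) (cols j)).det := by
  induction m using Nat.strong_induction_on with
  | _ m ih =>
  intro f₁ f₂ h1 h2 T1 T2 r rows cols hrw hcl hm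
  have key : ∀ (r : ℕ) (rows cols : Fin r → ℕ), StrictMono rows → StrictMono cols →
      (∀ j, 1 ≤ cols j) → r + ∑ i, cols i ≤ m →
      0 ≤ (Matrix.of fun i j => cDR 1 f₁ f₂ (rows i) (cols j)).det := by
    intro r rows cols hrw hcl hc1 hm
    rcases r with _ | r'
    · rw [Matrix.det_isEmpty]; exact zero_le_one
    set B : ℕ := rows (Fin.last r') + 1 with hBdef
    have hrB : ∀ i, rows i < B := fun i => by
      have := hrw.monotone (Fin.le_last i)
      omega
    apply minor_nonneg_of_prod (cDR 1 f₁ f₂) (toep f₁)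
      (fun j k => cDR 1 f₂ f₁ j (k - 1)) B rows cols
    · intro i k
      exact cDR1_shift_sum f₁ f₂ (rows i) (cols k) B (hrB i) (hc1 k)
    · intro s hs
      exact T1 _ rows (fun j => (s j : ℕ)) hrw (strictMono_val hs)
    · intro s hs
      have hsum : (r' + 1) + ∑ i, (cols i - 1) = ∑ i, cols i := by
        have h4 : ∑ i, cols i = ∑ i, ((cols i - 1) + 1) :=
          Finset.sum_congr rfl fun i _ => by have := hc1 i; omega
        rw [h4, Finset.sum_add_distrib, Finset.sum_const, Finset.card_univ, Fintype.card_fin,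
          smul_eq_mul, mul_one]
        omega
      have hm1 : 1 ≤ m := by omega
      have hb2 : (r' + 1) + ∑ i, (cols i - 1) ≤ m - 1 := by omega
      exact ih (m - 1) (by omega) f₂ f₁ h2 h1 T2 T1 (r' + 1) (fun i => (s i : ℕ))
        (fun j => cols j - 1) (strictMono_val hs)
        (fun a b hab => by
          have h5 := hcl hab
          have h6 := hc1 a
          show cols a - 1 < cols b - 1
          omega) hb2
  rcases r with _ | r'
  · rw [Matrix.det_isEmpty]; exact zero_le_one
  by_cases hc0 : cols 0 = 0
  · by_cases hr0 : rows 0 = 0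
    · set M : Matrix (Fin (r' + 1)) (Fin (r' + 1)) ℝ :=
        Matrix.of fun i j => cDR 1 f₁ f₂ (rows i) (cols j) with hMdef
      have hMc : ∀ i : Fin (r' + 1), i ≠ 0 → M i 0 = 0 := by
        intro i hi
        have hpos : 0 < rows i := by
          have h01 : rows 0 < rows i := hrw (Fin.pos_of_ne_zero hi)
          omega
        show cDR 1 f₁ f₂ (rows i) (cols 0) = 0
        rw [hc0, cDR1_col_zero]
        simp only [ite_eq_right_iff]
        omega
      have hM00 : M 0 0 = 1 := by
        show cDR 1 f₁ f₂ (rows 0) (cols 0) = 1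
        rw [hc0, hr0, cDR1_col_zero]
        simp
      rw [Matrix.det_succ_column_zero]
      rw [Fintype.sum_eq_single (0 : Fin (r' + 1))
        (fun i hi => by rw [hMc i hi]; ring)]
      rw [hM00, Fin.succAbove_zero]
      simp only [Fin.val_zero, pow_zero, one_mul, mul_one]
      have hsub : M.submatrix Fin.succ Fin.succ =
          Matrix.of fun i j => cDR 1 f₁ f₂ (rows i.succ) (cols j.succ) := rfl
      rw [hsub]
      have hsumc : ∑ i, cols i = cols 0 + ∑ j : Fin r', cols j.succ := Fin.sum_univ_succ cols
      apply key r' (fun i => rows i.succ) (fun j => cols j.succ)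
        (fun a b h => hrw (Fin.succ_lt_succ_iff.mpr h))
        (fun a b h => hcl (Fin.succ_lt_succ_iff.mpr h))
        (fun j => by
          have h5 := hcl (Fin.succ_pos j)
          show 1 ≤ cols j.succ
          omega)
        (by
          show r' + ∑ j : Fin r', cols j.succ ≤ m
          omega)
    · apply le_of_eq
      symm
      apply Matrix.det_eq_zero_of_column_eq_zero 0
      intro i
      show cDR 1 f₁ f₂ (rows i) (cols 0) = 0
      rw [hc0, cDR1_col_zero]
      have hpos : 0 < rows i :=
        lt_of_lt_of_le (Nat.pos_of_ne_zero hr0) (hrw.monotone (Fin.zero_le i))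
      simp only [ite_eq_right_iff]
      omega
  · exact key (r' + 1) rows cols hrw hcl
      (fun j => by have := hcl.monotone (Fin.zero_le j); omega) hm

end CDRTPAux

/-- Total positivity of compressed double Riordan arrays from Pólya frequency data. -/
theorem cDR_TP_of_PF
    (g f₁ f₂ : PowerSeries ℝ)
    (hf₁0 : constantCoeff f₁ = 0)
    (hf₂0 : constantCoeff f₂ = 0)
    (hTg : TotallyPositive fun i j => if j ≤ i then coeff (i - j) g else 0)
    (hTf₁ : TotallyPositive fun i j => if j ≤ i + 1 then coeff (i + 1 - j) f₁ else 0)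
    (hTf₂ : TotallyPositive fun i j => if j ≤ i + 1 then coeff (i + 1 - j) f₂ else 0) :
    TotallyPositive (cDR g f₁ f₂) := by
  classical
  intro r rows cols hrw hcl
  rcases r with _ | r'
  · rw [Matrix.det_isEmpty]; exact zero_le_one
  have T1 := CDRTPAux.toep_TP f₁ hf₁0 hTf₁
  have T2 := CDRTPAux.toep_TP f₂ hf₂0 hTf₂
  set B : ℕ := rows (Fin.last r') + 1 with hBdef
  have hrB : ∀ i, rows i < B := fun i => by
    have := hrw.monotone (Fin.le_last i)
    omega
  apply CDRTPAux.minor_nonneg_of_prod (cDR g f₁ f₂) (CDRTPAux.toep g) (cDR 1 f₁ f₂) B rows cols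
  · intro i k
    exact CDRTPAux.cDR_col_sum g f₁ f₂ (rows i) (cols k) B (hrB i)
  · intro s hs
    exact hTg _ rows (fun j => (s j : ℕ)) hrw (CDRTPAux.strictMono_val hs)
  · intro s hs
    exact CDRTPAux.inner_TP ((r' + 1) + ∑ i, cols i) f₁ f₂ hf₁0 hf₂0 T1 T2 (r' + 1)
      (fun i => (s i : ℕ)) cols (CDRTPAux.strictMono_val hs) hcl le_rfl
end

section
/- The compressed double almost-Riordan array (1|ĝ;f̂₁,f̂₂) is totally positive if and only if the compressed double Riordan array (ĝ;f̂₁,f̂₂) is totally positive. Here ĝ, f̂₁, f̂₂ ∈ ℝ[[t]] with f̂₁(0) = f̂₂(0) = 0. -/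
open PowerSeries

lemma cDAR_succ_succ (g f₁ f₂ : PowerSeries ℝ) (n k : ℕ) :
    cDAR 1 g f₁ f₂ (n + 1) (k + 1) = cDR g f₁ f₂ n k := by
  unfold cDAR cDR
  rcases Nat.mod_two_eq_zero_or_one k with h | h
  · have h1 : (k + 1) % 2 = 1 := by omega
    have h2 : (k + 1 - 1) / 2 = k / 2 := by omega
    rw [if_neg (Nat.succ_ne_zero k), if_pos h1, if_pos h, h2, mul_assoc]
    exact coeff_succ_X_mul n _
  · have h1 : (k + 1) % 2 ≠ 1 := by omega
    have h2 : (k + 1 - 2) / 2 = k / 2 := by omega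
    rw [if_neg (Nat.succ_ne_zero k), if_neg h1, if_neg (by omega : ¬ k % 2 = 0), h2,
      mul_assoc, mul_assoc, coeff_succ_X_mul, mul_assoc]

lemma cDAR_pos_pos (g f₁ f₂ : PowerSeries ℝ) {n k : ℕ} (hn : n ≠ 0) (hk : k ≠ 0) :
    cDAR 1 g f₁ f₂ n k = cDR g f₁ f₂ (n - 1) (k - 1) := by
  obtain ⟨m, rfl⟩ := Nat.exists_eq_succ_of_ne_zero hn
  obtain ⟨l, rfl⟩ := Nat.exists_eq_succ_of_ne_zero hk
  simpa using cDAR_succ_succ g f₁ f₂ m l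

lemma cDAR_col_zero (g f₁ f₂ : PowerSeries ℝ) (n : ℕ) :
    cDAR 1 g f₁ f₂ n 0 = if n = 0 then 1 else 0 := by
  simp [cDAR, coeff_one]

lemma cDAR_row_zero (g f₁ f₂ : PowerSeries ℝ) (k : ℕ) (hk : k ≠ 0) :
    cDAR 1 g f₁ f₂ 0 k = 0 := by
  have h0 : ∀ p : PowerSeries ℝ, coeff 0 (X * p) = 0 := by
    intro p
    rw [coeff_zero_eq_constantCoeff_apply, map_mul, constantCoeff_X, zero_mul]
  unfold cDAR
  rw [if_neg hk]
  split
  · rw [mul_assoc]; exact h0 _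
  · rw [mul_assoc, mul_assoc]; exact h0 _

/-- `(1 | ĝ; f̂₁, f̂₂)` is TP iff `(ĝ; f̂₁, f̂₂)` is TP. -/
theorem cDAR_one_TP_iff
    (g f₁ f₂ : PowerSeries ℝ)
    (hf₁0 : constantCoeff f₁ = 0)
    (hf₂0 : constantCoeff f₂ = 0) :
    TotallyPositive (cDAR 1 g f₁ f₂) ↔ TotallyPositive (cDR g f₁ f₂) := by
  constructor
  · intro hN r rows cols hr hc
    have h := hN r (fun i => rows i + 1) (fun j => cols j + 1)
      (fun a b hab => Nat.add_lt_add_right (hr hab) 1)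
      (fun a b hab => Nat.add_lt_add_right (hc hab) 1)
    have heq : (Matrix.of fun i j => cDR g f₁ f₂ (rows i) (cols j)) =
        Matrix.of fun i j => cDAR 1 g f₁ f₂ (rows i + 1) (cols j + 1) := by
      ext i j
      exact (cDAR_succ_succ g f₁ f₂ (rows i) (cols j)).symm
    rw [heq]
    exact h
  · intro hM r rows cols hr hc
    rcases r with _ | r
    · simp [Matrix.det_isEmpty]
    by_cases h0r : rows 0 = 0 <;> by_cases h0c : cols 0 = 0
    · -- both row 0 and col 0 of the minor come from index 0: expand along column 0
      rw [Matrix.det_succ_column_zero]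
      have hcol : ∀ i : Fin (r + 1), i ≠ 0 →
          (Matrix.of fun i j => cDAR 1 g f₁ f₂ (rows i) (cols j)) i 0 = 0 := by
        intro i hi
        have : rows 0 < rows i := hr (Fin.pos_of_ne_zero hi)
        rw [Matrix.of_apply, h0c, cDAR_col_zero, if_neg (by omega)]
      rw [Finset.sum_eq_single 0 (fun i _ hi => by rw [hcol i hi]; ring)
        (fun h => absurd (Finset.mem_univ 0) h)]
      have h00 : (Matrix.of fun i j => cDAR 1 g f₁ f₂ (rows i) (cols j)) 0 0 = 1 := by
        rw [Matrix.of_apply, h0r, h0c, cDAR_col_zero, if_pos rfl]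
      rw [h00]
      simp only [Fin.val_zero, pow_zero, one_mul, Fin.succAbove_zero]
      have hM' := hM r (fun i => rows i.succ - 1) (fun j => cols j.succ - 1)
        (fun a b hab => by
          show rows a.succ - 1 < rows b.succ - 1
          have h1 : rows 0 < rows a.succ := hr (Fin.succ_pos a)
          have h2 : rows a.succ < rows b.succ := hr (Fin.succ_lt_succ_iff.mpr hab)
          omega)
        (fun a b hab => by
          show cols a.succ - 1 < cols b.succ - 1
          have h1 : cols 0 < cols a.succ := hc (Fin.succ_pos a)
          have h2 : cols a.succ < cols b.succ := hc (Fin.succ_lt_succ_iff.mpr hab)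
          omega)
      have heq : ((Matrix.of fun i j => cDAR 1 g f₁ f₂ (rows i) (cols j)).submatrix
          Fin.succ Fin.succ) =
          Matrix.of fun i j => cDR g f₁ f₂ (rows i.succ - 1) (cols j.succ - 1) := by
        ext i j
        have hri : rows 0 < rows i.succ := hr (Fin.succ_pos i)
        have hcj : cols 0 < cols j.succ := hc (Fin.succ_pos j)
        simp only [Matrix.submatrix_apply, Matrix.of_apply]
        exact cDAR_pos_pos g f₁ f₂ (by omega) (by omega)
      rw [heq]
      exact hM'
    · -- rows 0 = 0 but cols 0 ≠ 0 : row 0 of the minor is zero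
      rw [Matrix.det_eq_zero_of_row_eq_zero 0 (fun j => by
        have : cols 0 ≤ cols j := hc.monotone (Fin.zero_le j)
        rw [Matrix.of_apply, h0r, cDAR_row_zero _ _ _ _ (by omega)])]
    · -- cols 0 = 0 but rows 0 ≠ 0 : column 0 of the minor is zero
      rw [Matrix.det_eq_zero_of_column_eq_zero 0 (fun i => by
        have : rows 0 ≤ rows i := hr.monotone (Fin.zero_le i)
        rw [Matrix.of_apply, h0c, cDAR_col_zero, if_neg (by omega)])]
    · -- all indices positive: a genuine minor of the cDR array
      have hM' := hM (r + 1) (fun i => rows i - 1) (fun j => cols j - 1)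
        (fun a b hab => by
          show rows a - 1 < rows b - 1
          have h1 : rows 0 ≤ rows a := hr.monotone (Fin.zero_le a)
          have h2 : rows a < rows b := hr hab
          omega)
        (fun a b hab => by
          show cols a - 1 < cols b - 1
          have h1 : cols 0 ≤ cols a := hc.monotone (Fin.zero_le a)
          have h2 : cols a < cols b := hc hab
          omega)
      have heq2 : (Matrix.of fun i j => cDAR 1 g f₁ f₂ (rows i) (cols j)) =
          Matrix.of fun i j => cDR g f₁ f₂ (rows i - 1) (cols j - 1) := by
        ext i j
        have hri : rows 0 ≤ rows i := hr.monotone (Fin.zero_le i)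
        have hcj : cols 0 ≤ cols j := hc.monotone (Fin.zero_le j)
        exact cDAR_pos_pos g f₁ f₂ (by omega) (by omega)
      rw [heq2]
      exact hM'
end

section
/- Let ĝ, f̂₁, f̂₂ ∈ ℝ[[t]] with f̂₁(0) = f̂₂(0) = 0 and suppose the compressed double Riordan array (ĝ;f̂₁,f̂₂) is totally positive. Then for every real α > 0, the compressed double almost-Riordan array (t·ĝ + α | ĝ; f̂₁, f̂₂) is also totally positive. -/
open PowerSeries

/-- Entries of the almost-Riordan array in a positive row are entries of the Riordan array,
shifted by one in both indices (with column `0` repeating column `1`). -/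
lemma cDAR_succ_row (g f₁ f₂ : PowerSeries ℝ) (α : ℝ) (m k : ℕ) :
    cDAR (X * g + C α) g f₁ f₂ (m + 1) k = cDR g f₁ f₂ m (k - 1) := by
  unfold cDAR cDR
  rcases Nat.eq_zero_or_pos k with hk | hk
  · subst hk
    simp [map_add, coeff_succ_X_mul, coeff_C]
  have hkne : ¬ k = 0 := by omega
  rcases Nat.even_or_odd k with hke | hko
  · have hk2 : k % 2 = 0 := Nat.even_iff.mp hke
    have hkm : ¬ k % 2 = 1 := by omega
    have hmod : ¬ (k - 1) % 2 = 0 := by omega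
    have hdiv : (k - 1) / 2 = (k - 2) / 2 := by omega
    rw [if_neg hkne, if_neg hkm, if_neg hmod, hdiv, mul_assoc, mul_assoc, mul_assoc,
      coeff_succ_X_mul]
  · have hk2 : k % 2 = 1 := Nat.odd_iff.mp hko
    have hmod : (k - 1) % 2 = 0 := by omega
    rw [if_neg hkne, if_pos hk2, if_pos hmod, mul_assoc, coeff_succ_X_mul]

lemma cDAR_zero_row (g f₁ f₂ : PowerSeries ℝ) (α : ℝ) (k : ℕ) :
    cDAR (X * g + C α) g f₁ f₂ 0 k = if k = 0 then α else 0 := by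
  unfold cDAR
  rcases Nat.eq_zero_or_pos k with hk | hk
  · subst hk
    simp [coeff_zero_eq_constantCoeff, map_add]
  · have hkne : ¬ k = 0 := by omega
    simp only [if_neg hkne]
    split <;> simp [coeff_zero_eq_constantCoeff, map_mul]

/-- Any minor of the almost-Riordan array using only positive row indices is nonnegative. -/
lemma cDAR_aux (g f₁ f₂ : PowerSeries ℝ)
    (h : TotallyPositive (cDR g f₁ f₂)) (α : ℝ)
    (r : ℕ) (rows cols : Fin r → ℕ) (hrows : StrictMono rows) (hcols : StrictMono cols)
    (hpos : ∀ i, 1 ≤ rows i) :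
    0 ≤ (Matrix.of fun i j => cDAR (X * g + C α) g f₁ f₂ (rows i) (cols j)).det := by
  have hentry : ∀ i j, cDAR (X * g + C α) g f₁ f₂ (rows i) (cols j)
      = cDR g f₁ f₂ (rows i - 1) (cols j - 1) := by
    intro i j
    have hp := hpos i
    obtain ⟨m, hm⟩ : ∃ m, rows i = m + 1 := ⟨rows i - 1, by omega⟩
    rw [hm, cDAR_succ_row, Nat.add_sub_cancel]
  have hrows' : StrictMono fun i => rows i - 1 := by
    intro i j hij
    have h1 := hrows hij
    have h2 := hpos i
    show rows i - 1 < rows j - 1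
    omega
  by_cases hsc : StrictMono fun j => cols j - 1
  · have := h r (fun i => rows i - 1) (fun j => cols j - 1) hrows' hsc
    convert this using 2
    funext i j
    simp only [Matrix.of_apply]
    exact hentry i j
  · -- two columns coincide, so the determinant is zero
    have hmono : Monotone fun j => cols j - 1 := fun i j hij =>
      Nat.sub_le_sub_right (hcols.monotone hij) 1
    obtain ⟨i, j, hij, hnot⟩ : ∃ i j, i < j ∧ ¬ (cols i - 1 < cols j - 1) := by
      by_contra hc
      push_neg at hc
      exact hsc fun i j hij => hc i j hij
    have heq : cols i - 1 = cols j - 1 := le_antisymm (hmono hij.le) (by omega)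
    have := Matrix.det_zero_of_column_eq (M := Matrix.of fun i j =>
        cDAR (X * g + C α) g f₁ f₂ (rows i) (cols j)) (i := i) (j := j) hij.ne
      (fun k => by simp only [Matrix.of_apply, hentry, heq])
    rw [this]

/-- If `(ĝ; f̂₁, f̂₂)` is TP then `(t·ĝ + α | ĝ; f̂₁, f̂₂)` is TP for every `α > 0`. -/
theorem cDAR_tg_add_alpha_TP
    (g f₁ f₂ : PowerSeries ℝ)
    (hf₁0 : constantCoeff f₁ = 0)
    (hf₂0 : constantCoeff f₂ = 0)
    (h : TotallyPositive (cDR g f₁ f₂)) :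
    ∀ α : ℝ, 0 < α → TotallyPositive (cDAR (X * g + C α) g f₁ f₂) := by
  intro α hα r rows cols hrows hcols
  rcases r with - | s
  · simp [Matrix.det_fin_zero]
  by_cases hr0 : 1 ≤ rows 0
  · exact cDAR_aux g f₁ f₂ h α _ rows cols hrows hcols
      (fun i => le_trans hr0 (hrows.monotone (Fin.zero_le i)))
  · have hr0' : rows 0 = 0 := by omega
    by_cases hc0 : cols 0 = 0
    · -- expand along the first row, which is `α` at column 0 and zero elsewhere
      have hrow0 : ∀ j, (Matrix.of fun i j =>
          cDAR (X * g + C α) g f₁ f₂ (rows i) (cols j)) 0 j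
          = if j = 0 then α else 0 := by
        intro j
        simp only [Matrix.of_apply, hr0', cDAR_zero_row]
        rcases eq_or_ne j 0 with hj | hj
        · simp [hj, hc0]
        · have : cols 0 < cols j := hcols (Fin.pos_iff_ne_zero.mpr hj)
          rw [if_neg (by omega), if_neg hj]
      rw [Matrix.det_succ_row_zero]
      have hsum : ∀ j : Fin (s + 1), j ≠ 0 → (-1 : ℝ) ^ (j : ℕ) *
          (Matrix.of fun i j => cDAR (X * g + C α) g f₁ f₂ (rows i) (cols j)) 0 j *
          ((Matrix.of fun i j => cDAR (X * g + C α) g f₁ f₂ (rows i) (cols j)).submatrix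
            Fin.succ j.succAbove).det = 0 := by
        intro j hj
        rw [hrow0 j, if_neg hj, mul_zero, zero_mul]
      rw [Finset.sum_eq_single 0 (fun j _ hj => hsum j hj) (by simp)]
      rw [hrow0 0, if_pos rfl]
      simp only [Fin.val_zero, pow_zero, one_mul]
      have hminor : 0 ≤ ((Matrix.of fun i j =>
          cDAR (X * g + C α) g f₁ f₂ (rows i) (cols j)).submatrix
            Fin.succ (Fin.succAbove 0)).det := by
        have : ((Matrix.of fun i j =>
            cDAR (X * g + C α) g f₁ f₂ (rows i) (cols j)).submatrix
              Fin.succ (Fin.succAbove 0))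
            = Matrix.of fun i j => cDAR (X * g + C α) g f₁ f₂
              (rows (Fin.succ i)) (cols (Fin.succ j)) := by
          funext i j
          simp [Matrix.submatrix_apply, Fin.succAbove_zero]
        rw [this]
        refine cDAR_aux g f₁ f₂ h α s (rows ∘ Fin.succ) (cols ∘ Fin.succ)
          (hrows.comp Fin.strictMono_succ) (hcols.comp Fin.strictMono_succ) ?_
        intro i
        have h1 : rows 0 < rows (Fin.succ i) := hrows (Fin.succ_pos i)
        show 1 ≤ rows (Fin.succ i)
        omega
      positivity
    · -- first column index is positive, so the first row is zero
      have : (Matrix.of fun i j =>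
          cDAR (X * g + C α) g f₁ f₂ (rows i) (cols j)).det = 0 := by
        apply Matrix.det_eq_zero_of_row_eq_zero 0
        intro j
        simp only [Matrix.of_apply, hr0', cDAR_zero_row]
        have hcj : cols j ≠ 0 := by
          rcases eq_or_ne j 0 with hj | hj
          · rw [hj]; exact hc0
          · have := hcols (Fin.pos_iff_ne_zero.mpr hj)
            omega
        rw [if_neg hcj]
      rw [this]
end

section
/- Let ĝ, f̂₁, f̂₂ ∈ ℝ[[t]] with f̂₁(0) = f̂₂(0) = 0, and let b̂ = b₀ + b₁t with b₀ ≥ 0 and b₁ ≥ 0. If the compressed double Riordan array (ĝ;f̂₁,f̂₂) is totally positive, then the compressed double almost-Riordan array (b₀ + b₁t | ĝ; f̂₁, f̂₂) is also totally positive. -/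
open PowerSeries

private lemma cDAR_shift (b g f₁ f₂ : PowerSeries ℝ) {n k : ℕ} (hn : 1 ≤ n) (hk : 1 ≤ k) :
    cDAR b g f₁ f₂ n k = cDR g f₁ f₂ (n - 1) (k - 1) := by
  obtain ⟨m, rfl⟩ := Nat.exists_eq_add_of_le hn
  obtain ⟨j, rfl⟩ := Nat.exists_eq_add_of_le hk
  simp only [cDAR, cDR, Nat.add_sub_cancel_left, Nat.add_sub_cancel]
  have hX : ∀ (p : PowerSeries ℝ), (coeff (1 + m)) (X * p) = coeff m p := by
    intro p
    rw [add_comm]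
    exact coeff_succ_X_mul m p
  by_cases hp : (1 + j) % 2 = 1
  · have hj : j % 2 = 0 := by omega
    have : (1 + j) ≠ 0 := by omega
    rw [if_neg this, if_pos hp, if_pos hj, mul_assoc, hX]
  · have hj : j % 2 = 1 := by omega
    have hj0 : ¬ (j % 2 = 0) := by omega
    have : (1 + j) ≠ 0 := by omega
    rw [if_neg this, if_neg hp, if_neg hj0, mul_assoc, mul_assoc, ← mul_assoc g, hX]
    congr 3
    omega

private lemma cDAR_row0 (b g f₁ f₂ : PowerSeries ℝ) {k : ℕ} (hk : k ≠ 0) :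
    cDAR b g f₁ f₂ 0 k = 0 := by
  simp only [cDAR, if_neg hk, coeff_zero_eq_constantCoeff, map_mul, constantCoeff_X,
    zero_mul]
  split <;> simp

private lemma cDAR_col0 (b₀ b₁ : ℝ) (g f₁ f₂ : PowerSeries ℝ) (n : ℕ) :
    cDAR (C b₀ + C b₁ * X) g f₁ f₂ n 0 =
      if n = 0 then b₀ else if n = 1 then b₁ else 0 := by
  simp only [cDAR, if_pos rfl, map_add, coeff_C]
  rcases n with _ | n
  · simp
  · rcases n with _ | n
    · simp [coeff_succ_X_mul]  -- coeff 1 (C b₁ * X)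
    · have h2 : (n + 1 + 1) ≠ 1 := by omega
      simp [coeff_C_mul, coeff_X, h2]

private lemma shifted_TP (b g f₁ f₂ : PowerSeries ℝ)
    (h : TotallyPositive (cDR g f₁ f₂))
    (r : ℕ) (rows cols : Fin r → ℕ) (hr : StrictMono rows) (hc : StrictMono cols)
    (hr1 : ∀ i, 1 ≤ rows i) (hc1 : ∀ j, 1 ≤ cols j) :
    0 ≤ (Matrix.of fun i j => cDAR b g f₁ f₂ (rows i) (cols j)).det := by
  have key : (Matrix.of fun i j => cDAR b g f₁ f₂ (rows i) (cols j)) =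
      Matrix.of fun i j => cDR g f₁ f₂ (rows i - 1) (cols j - 1) := by
    ext i j
    exact cDAR_shift b g f₁ f₂ (hr1 i) (hc1 j)
  rw [key]
  exact h r (fun i => rows i - 1) (fun j => cols j - 1)
    (fun i j hij => by
      show rows i - 1 < rows j - 1
      have := hr hij; have := hr1 i; omega)
    (fun i j hij => by
      show cols i - 1 < cols j - 1
      have := hc hij; have := hc1 i; omega)

/-- If `(ĝ; f̂₁, f̂₂)` is TP and `b̂ = b₀ + b₁t` with `b₀, b₁ ≥ 0`,
then `(b₀ + b₁t | ĝ; f̂₁, f̂₂)` is TP. -/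
theorem cDAR_linear_TP
    (g f₁ f₂ : PowerSeries ℝ)
    (hf₁0 : constantCoeff f₁ = 0)
    (hf₂0 : constantCoeff f₂ = 0)
    (b₀ b₁ : ℝ) (hb₀ : 0 ≤ b₀) (hb₁ : 0 ≤ b₁)
    (h : TotallyPositive (cDR g f₁ f₂)) :
    TotallyPositive (cDAR (C b₀ + C b₁ * X) g f₁ f₂) := by
  intro r rows cols hr hc
  match r with
  | 0 => simp [Matrix.det_isEmpty]
  | r + 1 =>
  set b : PowerSeries ℝ := C b₀ + C b₁ * X with hb
  set A : Matrix (Fin (r+1)) (Fin (r+1)) ℝ :=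
    Matrix.of fun i j => cDAR b g f₁ f₂ (rows i) (cols j) with hA
  by_cases hc0 : cols 0 = 0
  · by_cases hrow0 : rows 0 = 0
    · -- row 0 is (b₀, 0, ..., 0)
      rw [Matrix.det_succ_row_zero]
      rw [Finset.sum_eq_single_of_mem (0 : Fin (r+1)) (Finset.mem_univ _)
        (by
          intro j _ hj
          have hcj : cols j ≠ 0 := by
            have := hc (Fin.pos_of_ne_zero hj)
            omega
          have : A 0 j = 0 := by
            simp only [hA, Matrix.of_apply, hrow0]
            exact cDAR_row0 b g f₁ f₂ hcj
          simp [this])]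
      have hA00 : A 0 0 = b₀ := by
        simp only [hA, Matrix.of_apply, hrow0, hc0, hb, cDAR_col0]
        simp
      rw [hA00]
      simp only [Fin.val_zero, pow_zero, one_mul, Fin.succAbove_zero]
      apply mul_nonneg hb₀
      exact shifted_TP b g f₁ f₂ h r (rows ∘ Fin.succ) (cols ∘ Fin.succ)
        (hr.comp Fin.strictMono_succ) (hc.comp Fin.strictMono_succ)
        (fun i => by
          have := hr (show (0 : Fin (r+1)) < Fin.succ i from Fin.succ_pos i)
          simp only [Function.comp]; omega)
        (fun j => by
          have := hc (show (0 : Fin (r+1)) < Fin.succ j from Fin.succ_pos j)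
          simp only [Function.comp]; omega)
    · by_cases hrow1 : rows 0 = 1
      · -- column 0 is (b₁, 0, ..., 0)
        rw [Matrix.det_succ_column_zero]
        rw [Finset.sum_eq_single_of_mem (0 : Fin (r+1)) (Finset.mem_univ _)
          (by
            intro i _ hi
            have hri : 2 ≤ rows i := by
              have := hr (Fin.pos_of_ne_zero hi)
              omega
            have : A i 0 = 0 := by
              simp only [hA, Matrix.of_apply, hc0, hb, cDAR_col0]
              have h1 : rows i ≠ 0 := by omega
              have h2 : rows i ≠ 1 := by omega
              simp [h1, h2]
            simp [this])]
        have hA00 : A 0 0 = b₁ := by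
          simp only [hA, Matrix.of_apply, hrow1, hc0, hb, cDAR_col0]
          simp
        rw [hA00]
        simp only [Fin.val_zero, pow_zero, one_mul, Fin.succAbove_zero]
        apply mul_nonneg hb₁
        exact shifted_TP b g f₁ f₂ h r (rows ∘ Fin.succ) (cols ∘ Fin.succ)
          (hr.comp Fin.strictMono_succ) (hc.comp Fin.strictMono_succ)
          (fun i => by
            have := hr (show (0 : Fin (r+1)) < Fin.succ i from Fin.succ_pos i)
            simp only [Function.comp]; omega)
          (fun j => by
            have := hc (show (0 : Fin (r+1)) < Fin.succ j from Fin.succ_pos j)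
            simp only [Function.comp]; omega)
      · -- rows 0 ≥ 2 : column 0 of A is zero
        have : A.det = 0 := by
          apply Matrix.det_eq_zero_of_column_eq_zero 0
          intro i
          have hri : 2 ≤ rows i := by
            have h0 : rows 0 ≤ rows i := hr.monotone (Fin.zero_le i)
            omega
          simp only [hA, Matrix.of_apply, hc0, hb, cDAR_col0]
          have h1 : rows i ≠ 0 := by omega
          have h2 : rows i ≠ 1 := by omega
          simp [h1, h2]
        rw [this]
  · -- cols 0 ≥ 1
    by_cases hrow0 : rows 0 = 0
    · have : A.det = 0 := by
        apply Matrix.det_eq_zero_of_row_eq_zero 0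
        intro j
        have hcj : cols j ≠ 0 := by
          have := hc.monotone (Fin.zero_le j)
          omega
        simp only [hA, Matrix.of_apply, hrow0]
        exact cDAR_row0 b g f₁ f₂ hcj
      rw [this]
    · exact shifted_TP b g f₁ f₂ h (r+1) rows cols hr hc
        (fun i => by have := hr.monotone (Fin.zero_le i); omega)
        (fun j => by have := hc.monotone (Fin.zero_le j); omega)
end
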